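/- arXiv:0812.1719 — 8 statements merged into one kernel-verified Lean document; each statement's English description precedes it below -/
import Mathlib

section
/- Let (X_i)_{1≤i≤n} be a finite sequence of supermartingale differences adapted to a filtration (F_i), such that for some constant K > 0 and all i, almost surely E[exp(|X_i|) | F_{i-1}] ≤ K. Then for every ε > 0 there exist 0 < x_0 < x_1 and K_1 > 0, depending only on K and ε, such that: P[S_n/n > x] ≤ exp(−n x²/(4K(1+ε))) if 0 < x < x_0; P[S_n/n > x] ≤ exp(−n x/K_1) if x_0 ≤ x ≤ x_1; and P[S_n/n > x] ≤ exp(−n x/(1+ε)) if x > x_1. -/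
open MeasureTheory ProbabilityTheory Filter

lemma exp_le_aux (s : ℝ) : Real.exp s ≤ 1 + s + s ^ 2 * Real.exp |s| := by
  rcases le_or_gt 0 s with hs | hs
  · rw [abs_of_nonneg hs]
    have h1 : 1 - s ≤ Real.exp (-s) := by linarith [Real.add_one_le_exp (-s)]
    have h2 : Real.exp (-s) * Real.exp s = 1 := by
      rw [← Real.exp_add]; simp
    have hE : 0 < Real.exp s := Real.exp_pos s
    nlinarith [mul_le_mul_of_nonneg_right h1 (by linarith : (0:ℝ) ≤ 1 + s),
      mul_le_mul_of_nonneg_right (mul_le_mul_of_nonneg_right h1 (by linarith : (0:ℝ) ≤ 1 + s)) hE.le]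
  · rw [abs_of_neg hs]
    have h1 : 1 + -s ≤ Real.exp (-s) := Real.add_one_le_exp (-s) |>.trans_eq' (by ring)
    have h4 : 1 + s ≤ Real.exp s := by linarith [Real.add_one_le_exp s]
    have h5 : (1:ℝ) ≤ Real.exp (-s) := Real.one_le_exp (by linarith)
    have hE : 0 < Real.exp s := Real.exp_pos s
    have h2 : Real.exp (-s) * Real.exp s = 1 := by rw [← Real.exp_add]; simp
    have h3 : (1 - s) * Real.exp s ≤ 1 := by
      have := mul_le_mul_of_nonneg_right h1 hE.le
      nlinarith [this, h2]
    have h6 : (-s) * (1 - Real.exp s) ≤ (-s) * (-s) :=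
      mul_le_mul_of_nonneg_left (by linarith) (by linarith)
    have h7 : s ^ 2 * 1 ≤ s ^ 2 * Real.exp (-s) :=
      mul_le_mul_of_nonneg_left h5 (sq_nonneg s)
    linarith [h3, h6, h7]

lemma sq_le_exp_aux (u : ℝ) (hu : 0 ≤ u) : u ^ 2 ≤ 4 * Real.exp (u - 2) := by
  have h1 : u / 2 ≤ Real.exp (u / 2 - 1) := by linarith [Real.add_one_le_exp (u / 2 - 1)]
  have h2 : Real.exp (u / 2 - 1) * Real.exp (u / 2 - 1) = Real.exp (u - 2) := by
    rw [← Real.exp_add]; ring_nf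
  nlinarith [mul_le_mul h1 h1 (by linarith) (Real.exp_pos _).le]

lemma exp_mul_le (l y : ℝ) (hl0 : 0 ≤ l) (hl1 : l < 1) :
    Real.exp (l * y) ≤ 1 + l * y + 4 * l ^ 2 / ((1 - l) ^ 2 * Real.exp 2) * Real.exp |y| := by
  have habs : |l * y| = l * |y| := by rw [abs_mul, abs_of_nonneg hl0]
  have h1 := exp_le_aux (l * y)
  rw [habs] at h1
  refine h1.trans ?_
  have key : (l * y) ^ 2 * Real.exp (l * |y|) ≤
      4 * l ^ 2 / ((1 - l) ^ 2 * Real.exp 2) * Real.exp |y| := by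
    have hB := sq_le_exp_aux ((1 - l) * |y|) (mul_nonneg (by linarith) (abs_nonneg y))
    -- (1-l)^2 y^2 ≤ 4 exp((1-l)|y|) / exp 2
    have hsq : y ^ 2 = |y| ^ 2 := (sq_abs y).symm
    have he2 : 0 < Real.exp 2 := Real.exp_pos 2
    have hl' : 0 < (1 - l) ^ 2 := pow_pos (by linarith) 2
    have hexp : Real.exp ((1 - l) * |y| - 2) * Real.exp (l * |y|) * Real.exp 2
        = Real.exp |y| := by
      rw [← Real.exp_add, ← Real.exp_add]; ring_nf
    have hel : 0 < Real.exp (l * |y|) := Real.exp_pos _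
    rw [div_mul_eq_mul_div, le_div_iff₀ (by positivity)]
    calc (l * y) ^ 2 * Real.exp (l * |y|) * ((1 - l) ^ 2 * Real.exp 2)
        = ((1 - l) * |y|) ^ 2 * (l ^ 2 * Real.exp (l * |y|) * Real.exp 2) := by
          rw [mul_pow, mul_pow, hsq]; ring
      _ ≤ 4 * Real.exp ((1 - l) * |y| - 2) * (l ^ 2 * Real.exp (l * |y|) * Real.exp 2) := by
          apply mul_le_mul_of_nonneg_right hB (by positivity)
      _ = 4 * l ^ 2 * Real.exp |y| := by rw [← hexp]; ring
  linarith

lemma master_bound {Ω : Type*} {m0 : MeasurableSpace Ω} (μ : Measure Ω) [IsProbabilityMeasure μ]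
    (ℱ : Filtration ℕ m0) (n : ℕ) (X : ℕ → Ω → ℝ) (K : ℝ) (hK : 0 < K)
    (hmeas : ∀ i ∈ Finset.Icc 1 n, StronglyMeasurable[ℱ i] (X i))
    (hint : ∀ i ∈ Finset.Icc 1 n, Integrable (X i) μ)
    (hsup : ∀ i ∈ Finset.Icc 1 n, ∀ᵐ ω ∂μ, (μ[X i|ℱ (i - 1)]) ω ≤ 0)
    (hexpint : ∀ i ∈ Finset.Icc 1 n, Integrable (fun ω => Real.exp |X i ω|) μ)
    (hexpcond : ∀ i ∈ Finset.Icc 1 n,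
      ∀ᵐ ω ∂μ, (μ[fun ω' => Real.exp (|X i ω'|)|ℱ (i - 1)]) ω ≤ K)
    (l : ℝ) (hl0 : 0 ≤ l) (hl1 : l < 1) (t : ℝ) :
    μ {ω | t < ∑ i ∈ Finset.Icc 1 n, X i ω} ≤
      ENNReal.ofReal (Real.exp
        ((n : ℝ) * (4 * l ^ 2 / ((1 - l) ^ 2 * Real.exp 2) * K) - l * t)) := by
  set c : ℝ := 4 * l ^ 2 / ((1 - l) ^ 2 * Real.exp 2) with hc_def
  have hc0 : 0 ≤ c := by
    apply div_nonneg (by positivity)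
    exact mul_nonneg (sq_nonneg _) (Real.exp_pos 2).le
  set B : ℝ := c * K with hB_def
  have hB0 : 0 ≤ B := mul_nonneg hc0 hK.le
  -- measurability of the X i w.r.t. m0
  have hXm0 : ∀ i ∈ Finset.Icc 1 n, Measurable (X i) := fun i hi =>
    ((hmeas i hi).mono (ℱ.le i)).measurable
  -- the key induction
  have key : ∀ k, k ≤ n →
      Integrable (fun ω => ∏ i ∈ Finset.Icc 1 k, Real.exp (l * X i ω)) μ ∧
      ∫ ω, ∏ i ∈ Finset.Icc 1 k, Real.exp (l * X i ω) ∂μ ≤ (1 + B) ^ k := by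
    intro k
    induction k with
    | zero =>
      intro _
      constructor
      · simpa using (integrable_const (1:ℝ))
      · simp
    | succ k ih =>
      intro hkn
      obtain ⟨hYint, hYle⟩ := ih (Nat.le_of_succ_le hkn)
      have hi : k + 1 ∈ Finset.Icc 1 n := by simp [Finset.mem_Icc]; omega
      set Y : Ω → ℝ := fun ω => ∏ i ∈ Finset.Icc 1 k, Real.exp (l * X i ω) with hY_def
      set Z : Ω → ℝ := fun ω => Real.exp (l * X (k + 1) ω) with hZ_def
      have hYnn : ∀ ω, 0 ≤ Y ω := fun ω =>
        Finset.prod_nonneg fun i _ => (Real.exp_pos _).le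
      have hZnn : ∀ ω, 0 ≤ Z ω := fun ω => (Real.exp_pos _).le
      have hYmeas : Measurable Y := by
        apply Finset.measurable_prod
        intro i hii
        have hiIcc : i ∈ Finset.Icc 1 n := by
          simp only [Finset.mem_Icc] at hii ⊢; omega
        exact ((hXm0 i hiIcc).const_mul l).exp
      have hY_sm : StronglyMeasurable[ℱ k] Y := by
        apply Measurable.stronglyMeasurable
        apply Finset.measurable_prod
        intro i hii
        have hik : i ≤ k := (Finset.mem_Icc.mp hii).2
        have hiIcc : i ∈ Finset.Icc 1 n := by
          simp only [Finset.mem_Icc] at hii ⊢; omega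
        have : Measurable[ℱ i] (X i) := (hmeas i hiIcc).measurable
        exact ((this.mono (ℱ.mono hik) le_rfl).const_mul l).exp
      have hZmeas : Measurable Z := ((hXm0 _ hi).const_mul l).exp
      have hZint : Integrable Z μ := by
        refine (hexpint _ hi).mono hZmeas.aestronglyMeasurable (ae_of_all _ fun ω => ?_)
        rw [Real.norm_eq_abs, Real.norm_eq_abs, abs_of_nonneg (hZnn ω),
          abs_of_nonneg (Real.exp_pos _).le]
        apply Real.exp_le_exp.mpr
        calc l * X (k+1) ω ≤ |l * X (k+1) ω| := le_abs_self _
          _ = l * |X (k+1) ω| := by rw [abs_mul, abs_of_nonneg hl0]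
          _ ≤ 1 * |X (k+1) ω| := by
              apply mul_le_mul_of_nonneg_right hl1.le (abs_nonneg _)
          _ = |X (k+1) ω| := one_mul _
      -- conditional expectation bound for Z
      have hsup' := hsup _ hi
      have hexpcond' := hexpcond _ hi
      simp only [Nat.add_sub_cancel] at hsup' hexpcond'
      have hcondZ : (μ[Z|ℱ k]) ≤ᵐ[μ] fun _ => 1 + B := by
        have hW1 : Integrable ((fun _ : Ω => (1:ℝ)) + l • X (k+1)) μ :=
          (integrable_const 1).add ((hint _ hi).smul l)
        have hW2 : Integrable (c • fun ω => Real.exp |X (k+1) ω|) μ :=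
          (hexpint _ hi).smul c
        have hptw : ∀ ω, Z ω ≤
            ((fun _ : Ω => (1:ℝ)) + l • X (k+1) + c • fun ω => Real.exp |X (k+1) ω|) ω :=
          fun ω => by
            simpa [Pi.add_apply, Pi.smul_apply, smul_eq_mul, hc_def] using
              exp_mul_le l (X (k+1) ω) hl0 hl1
        have h1 := condExp_mono (m := ℱ k) (μ := μ) hZint (hW1.add hW2) (ae_of_all _ hptw)
        have h2 := condExp_add (m := ℱ k) (μ := μ) hW1 hW2
        have h3 := condExp_add (m := ℱ k) (μ := μ) (integrable_const (1:ℝ)) ((hint _ hi).smul l)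
        have h4 := condExp_smul (m := ℱ k) (μ := μ) l (X (k+1))
        have h5 := condExp_smul (m := ℱ k) (μ := μ) c (fun ω => Real.exp |X (k+1) ω|)
        have h6 := condExp_const (ℱ.le k) (1:ℝ) (μ := μ)
        filter_upwards [h1, h2, h3, h4, h5, hsup', hexpcond'] with ω e1 e2 e3 e4 e5 e6 e7
        have h6' : (μ[(fun _ : Ω => (1:ℝ))|ℱ k]) ω = 1 := by rw [h6]
        rw [e2, Pi.add_apply, e3, Pi.add_apply, e4, e5, h6', Pi.smul_apply, Pi.smul_apply,
          smul_eq_mul, smul_eq_mul] at e1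
        have : l * (μ[X (k+1)|ℱ k]) ω ≤ 0 :=
          mul_nonpos_of_nonneg_of_nonpos hl0 e6
        have h7 : c * (μ[fun ω' => Real.exp (|X (k+1) ω'|)|ℱ k]) ω ≤ c * K :=
          mul_le_mul_of_nonneg_left e7 hc0
        calc (μ[Z|ℱ k]) ω ≤ 1 + l * (μ[X (k+1)|ℱ k]) ω
            + c * (μ[fun ω' => Real.exp (|X (k+1) ω'|)|ℱ k]) ω := e1
          _ ≤ 1 + B := by rw [hB_def]; linarith
      have hcondZ_nn : 0 ≤ᵐ[μ] (μ[Z|ℱ k]) :=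
        condExp_nonneg (ae_of_all _ hZnn)
      -- truncations
      have hZm_int : ∀ m : ℕ, Integrable (fun ω => min (Z ω) (m:ℝ)) μ := by
        intro m
        refine hZint.mono ((hZmeas.min measurable_const).aestronglyMeasurable)
          (ae_of_all _ fun ω => ?_)
        rw [Real.norm_eq_abs, Real.norm_eq_abs,
          abs_of_nonneg (le_min (hZnn ω) (Nat.cast_nonneg m)), abs_of_nonneg (hZnn ω)]
        exact min_le_left _ _
      have hm_int : ∀ m : ℕ, Integrable (fun ω => Y ω * min (Z ω) (m:ℝ)) μ := by
        intro m
        refine (hYint.bdd_mul (c := m)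
          ((hZmeas.min measurable_const).aestronglyMeasurable)
          (ae_of_all _ fun ω => ?_)).congr (ae_of_all _ fun ω => mul_comm _ _)
        rw [Real.norm_eq_abs, abs_of_nonneg (le_min (hZnn ω) (Nat.cast_nonneg m))]
        exact min_le_right _ _
      have hcondZm : ∀ m : ℕ, (μ[(fun ω => min (Z ω) (m:ℝ))|ℱ k]) ≤ᵐ[μ] fun _ => 1 + B := by
        intro m
        exact (condExp_mono (hZm_int m) hZint
          (ae_of_all _ fun ω => min_le_left _ _)).trans hcondZ
      have hcondZm_nn : ∀ m : ℕ, 0 ≤ᵐ[μ] (μ[(fun ω => min (Z ω) (m:ℝ))|ℱ k]) := fun m =>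
        condExp_nonneg (ae_of_all _ fun ω => le_min (hZnn ω) (Nat.cast_nonneg m))
      -- integral bound for each truncation
      have hm_bound : ∀ m : ℕ, ∫ ω, Y ω * min (Z ω) (m:ℝ) ∂μ ≤ (1 + B) ^ (k + 1) := by
        intro m
        have hpull := condExp_mul_of_stronglyMeasurable_left (μ := μ) hY_sm
          (show Integrable (Y * fun ω => min (Z ω) (m:ℝ)) μ from hm_int m) (hZm_int m)
        have e0 : ∫ ω, Y ω * min (Z ω) (m:ℝ) ∂μ
            = ∫ ω, (μ[(Y * fun ω => min (Z ω) (m:ℝ))|ℱ k]) ω ∂μ :=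
          (integral_condExp (ℱ.le k)).symm
        have e1 : ∫ ω, (μ[(Y * fun ω => min (Z ω) (m:ℝ))|ℱ k]) ω ∂μ
            = ∫ ω, Y ω * (μ[(fun ω => min (Z ω) (m:ℝ))|ℱ k]) ω ∂μ :=
          integral_congr_ae (hpull.mono fun ω h => by simpa using h)
        have hprod2_int : Integrable (fun ω => Y ω * (μ[(fun ω => min (Z ω) (m:ℝ))|ℱ k]) ω) μ := by
          refine (hYint.bdd_mul (c := 1 + B)
            (stronglyMeasurable_condExp.mono (ℱ.le k)).aestronglyMeasurable ?_).congr
            (ae_of_all _ fun ω => mul_comm _ _)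
          filter_upwards [hcondZm m, hcondZm_nn m] with ω h1 h2
          rw [Real.norm_eq_abs, abs_of_nonneg h2]; exact h1
        have e2 : ∫ ω, Y ω * (μ[(fun ω => min (Z ω) (m:ℝ))|ℱ k]) ω ∂μ
            ≤ ∫ ω, Y ω * (1 + B) ∂μ := by
          refine integral_mono_ae hprod2_int (hYint.mul_const _) ?_
          filter_upwards [hcondZm m] with ω h1
          exact mul_le_mul_of_nonneg_left h1 (hYnn ω)
        have e3 : ∫ ω, Y ω * (1 + B) ∂μ = (∫ ω, Y ω ∂μ) * (1 + B) :=
          integral_mul_const _ _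
        rw [e0, e1]
        refine e2.trans ?_
        rw [e3, pow_succ]
        exact mul_le_mul_of_nonneg_right hYle (by linarith)
      -- pass to the limit
      have hlim : ∫⁻ ω, ENNReal.ofReal (Y ω * Z ω) ∂μ ≤ ENNReal.ofReal ((1 + B) ^ (k + 1)) := by
        have hsup_eq : ∀ ω, (⨆ m : ℕ, ENNReal.ofReal (Y ω * min (Z ω) (m:ℝ)))
            = ENNReal.ofReal (Y ω * Z ω) := by
          intro ω
          apply le_antisymm
          · exact iSup_le fun m => ENNReal.ofReal_le_ofReal
              (mul_le_mul_of_nonneg_left (min_le_left _ _) (hYnn ω))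
          · refine le_iSup_of_le ⌈Z ω⌉₊ (le_of_eq ?_)
            rw [min_eq_left (Nat.le_ceil _)]
        have hmono : Monotone (fun (m : ℕ) => fun ω => ENNReal.ofReal (Y ω * min (Z ω) (m:ℝ))) := by
          intro m m' hmm ω
          exact ENNReal.ofReal_le_ofReal (mul_le_mul_of_nonneg_left
            (min_le_min le_rfl (Nat.cast_le.mpr hmm)) (hYnn ω))
        have hfm : ∀ m : ℕ, Measurable (fun ω => ENNReal.ofReal (Y ω * min (Z ω) (m:ℝ))) :=
          fun m => (hYmeas.mul (hZmeas.min measurable_const)).ennreal_ofReal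
        calc ∫⁻ ω, ENNReal.ofReal (Y ω * Z ω) ∂μ
            = ∫⁻ ω, ⨆ m : ℕ, ENNReal.ofReal (Y ω * min (Z ω) (m:ℝ)) ∂μ := by
              simp_rw [hsup_eq]
          _ = ⨆ m : ℕ, ∫⁻ ω, ENNReal.ofReal (Y ω * min (Z ω) (m:ℝ)) ∂μ :=
              lintegral_iSup hfm hmono
          _ ≤ ENNReal.ofReal ((1 + B) ^ (k + 1)) := by
              refine iSup_le fun m => ?_
              rw [← ofReal_integral_eq_lintegral_ofReal (hm_int m)
                (ae_of_all _ fun ω => mul_nonneg (hYnn ω) (le_min (hZnn ω) (Nat.cast_nonneg m)))]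
              exact ENNReal.ofReal_le_ofReal (hm_bound m)
      have hYZnn : ∀ ω, 0 ≤ Y ω * Z ω := fun ω => mul_nonneg (hYnn ω) (hZnn ω)
      have hYZ_int : Integrable (fun ω => Y ω * Z ω) μ := by
        refine ⟨(hYmeas.mul hZmeas).aestronglyMeasurable, ?_⟩
        rw [hasFiniteIntegral_iff_norm]
        calc ∫⁻ ω, ENNReal.ofReal ‖Y ω * Z ω‖ ∂μ
            = ∫⁻ ω, ENNReal.ofReal (Y ω * Z ω) ∂μ := by
              congr 1; funext ω; rw [Real.norm_eq_abs, abs_of_nonneg (hYZnn ω)]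
          _ ≤ ENNReal.ofReal ((1 + B) ^ (k + 1)) := hlim
          _ < ⊤ := ENNReal.ofReal_lt_top
      have hYZ_le : ∫ ω, Y ω * Z ω ∂μ ≤ (1 + B) ^ (k + 1) := by
        have := ofReal_integral_eq_lintegral_ofReal hYZ_int (ae_of_all _ hYZnn)
        rw [← ENNReal.ofReal_le_ofReal_iff (by positivity), this]
        exact hlim
      have hprod_eq : ∀ ω, (∏ i ∈ Finset.Icc 1 (k+1), Real.exp (l * X i ω)) = Y ω * Z ω := by
        intro ω
        exact Finset.prod_Icc_succ_top (by omega) _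
      constructor
      · exact hYZ_int.congr (ae_of_all _ fun ω => (hprod_eq ω).symm)
      · calc ∫ ω, ∏ i ∈ Finset.Icc 1 (k+1), Real.exp (l * X i ω) ∂μ
            = ∫ ω, Y ω * Z ω ∂μ := by simp_rw [hprod_eq]
          _ ≤ (1 + B) ^ (k + 1) := hYZ_le
  -- Markov / Chernoff step
  obtain ⟨hNint, hNle⟩ := key n le_rfl
  have hSmeas : Measurable (fun ω => ∑ i ∈ Finset.Icc 1 n, X i ω) :=
    Finset.measurable_sum _ fun i hi => hXm0 i hi
  have hexp_eq : ∀ ω, Real.exp (l * ∑ i ∈ Finset.Icc 1 n, X i ω)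
      = ∏ i ∈ Finset.Icc 1 n, Real.exp (l * X i ω) := by
    intro ω
    rw [Finset.mul_sum, Real.exp_sum]
  have hmarkov := mul_meas_ge_le_lintegral₀ (μ := μ)
    (f := fun ω => ENNReal.ofReal (Real.exp (l * ∑ i ∈ Finset.Icc 1 n, X i ω)))
    ((hSmeas.const_mul l).exp.ennreal_ofReal.aemeasurable)
    (ENNReal.ofReal (Real.exp (l * t)))
  have hsub : {ω | t < ∑ i ∈ Finset.Icc 1 n, X i ω} ⊆
      {ω | ENNReal.ofReal (Real.exp (l * t))
        ≤ ENNReal.ofReal (Real.exp (l * ∑ i ∈ Finset.Icc 1 n, X i ω))} := by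
    intro ω hω
    simp only [Set.mem_setOf_eq] at hω ⊢
    exact ENNReal.ofReal_le_ofReal (Real.exp_le_exp.mpr
      (mul_le_mul_of_nonneg_left hω.le hl0))
  have hlint : ∫⁻ ω, ENNReal.ofReal (Real.exp (l * ∑ i ∈ Finset.Icc 1 n, X i ω)) ∂μ
      ≤ ENNReal.ofReal ((1 + B) ^ n) := by
    rw [← ofReal_integral_eq_lintegral_ofReal
      (hNint.congr (ae_of_all _ fun ω => (hexp_eq ω).symm))
      (ae_of_all _ fun ω => (Real.exp_pos _).le)]
    apply ENNReal.ofReal_le_ofReal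
    calc ∫ ω, Real.exp (l * ∑ i ∈ Finset.Icc 1 n, X i ω) ∂μ
        = ∫ ω, ∏ i ∈ Finset.Icc 1 n, Real.exp (l * X i ω) ∂μ := by simp_rw [hexp_eq]
      _ ≤ (1 + B) ^ n := hNle
  have h0 : ENNReal.ofReal (Real.exp (l * t)) ≠ 0 := by
    simp [Real.exp_pos]
  have htop : ENNReal.ofReal (Real.exp (l * t)) ≠ ⊤ := ENNReal.ofReal_ne_top
  have step : ENNReal.ofReal (Real.exp (l * t)) * μ {ω | t < ∑ i ∈ Finset.Icc 1 n, X i ω}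
      ≤ ENNReal.ofReal ((1 + B) ^ n) := by
    refine le_trans ?_ (hmarkov.trans hlint)
    exact mul_le_mul_right (measure_mono hsub) _
  have hdiv : μ {ω | t < ∑ i ∈ Finset.Icc 1 n, X i ω}
      ≤ ENNReal.ofReal ((1 + B) ^ n) / ENNReal.ofReal (Real.exp (l * t)) := by
    rw [ENNReal.le_div_iff_mul_le (Or.inl h0) (Or.inl htop), mul_comm]
    exact step
  refine hdiv.trans ?_
  rw [← ENNReal.ofReal_div_of_pos (Real.exp_pos _)]
  apply ENNReal.ofReal_le_ofReal
  have h1 : (1 + B) ^ n ≤ Real.exp ((n : ℝ) * B) := by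
    rw [Real.exp_nat_mul]
    exact pow_le_pow_left₀ (by linarith) (by linarith [Real.add_one_le_exp B]) n
  calc (1 + B) ^ n / Real.exp (l * t) ≤ Real.exp ((n : ℝ) * B) / Real.exp (l * t) := by
        gcongr
    _ = Real.exp ((n : ℝ) * B - l * t) := by rw [Real.exp_sub]

lemma exp_two_gt : (7.29 : ℝ) < Real.exp 2 := by
  have h := Real.exp_one_gt_d9
  have h2 : Real.exp 2 = Real.exp 1 * Real.exp 1 := by
    rw [← Real.exp_add]; norm_num
  nlinarith

lemma c_le_sq (l : ℝ) (hl0 : 0 ≤ l) (hl4 : l ≤ 1/4) :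
    4 * l ^ 2 / ((1 - l) ^ 2 * Real.exp 2) ≤ l ^ 2 := by
  have hD : (0:ℝ) < (1 - l) ^ 2 * Real.exp 2 :=
    mul_pos (pow_pos (by linarith) 2) (Real.exp_pos 2)
  rw [div_le_iff₀ hD]
  have h916 : (9/16 : ℝ) ≤ (1 - l) ^ 2 := by nlinarith
  have key : (4:ℝ) ≤ (1 - l) ^ 2 * Real.exp 2 := by nlinarith [exp_two_gt]
  have := mul_le_mul_of_nonneg_left key (sq_nonneg l)
  linarith

/-- Corollary 2.2: refined deviation bounds for supermartingale differences, with
thresholds `x₀ < x₁` and constant `K₁` depending only on `K` and `ε`. -/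
theorem supermartingale_refined_deviation_bounds (K ε : ℝ) (hK : 0 < K) (hε : 0 < ε) :
    ∃ x₀ x₁ K₁ : ℝ, 0 < x₀ ∧ x₀ < x₁ ∧ 0 < K₁ ∧
      ∀ {Ω : Type*} {m0 : MeasurableSpace Ω} (μ : Measure Ω), IsProbabilityMeasure μ →
      ∀ (ℱ : Filtration ℕ m0) (n : ℕ) (X : ℕ → Ω → ℝ), 1 ≤ n →
        (∀ i ∈ Finset.Icc 1 n, StronglyMeasurable[ℱ i] (X i)) →
        (∀ i ∈ Finset.Icc 1 n, Integrable (X i) μ) →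
        (∀ i ∈ Finset.Icc 1 n, ∀ᵐ ω ∂μ, (μ[X i|ℱ (i - 1)]) ω ≤ 0) →
        (∀ i ∈ Finset.Icc 1 n, Integrable (fun ω => Real.exp |X i ω|) μ) →
        (∀ i ∈ Finset.Icc 1 n,
          ∀ᵐ ω ∂μ, (μ[fun ω' => Real.exp (|X i ω'|)|ℱ (i - 1)]) ω ≤ K) →
        ∀ x : ℝ,
          (0 < x → x < x₀ →
            μ {ω | (∑ i ∈ Finset.Icc 1 n, X i ω) / n > x} ≤
              ENNReal.ofReal (Real.exp (-(n * x ^ 2 / (4 * K * (1 + ε)))))) ∧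
          (x₀ ≤ x → x ≤ x₁ →
            μ {ω | (∑ i ∈ Finset.Icc 1 n, X i ω) / n > x} ≤
              ENNReal.ofReal (Real.exp (-(n * x / K₁)))) ∧
          (x₁ < x →
            μ {ω | (∑ i ∈ Finset.Icc 1 n, X i ω) / n > x} ≤
              ENNReal.ofReal (Real.exp (-(n * x / (1 + ε))))) := by
  set d : ℝ := ε / (2 * (1 + ε)) with hd_def
  have h1ε : (0:ℝ) < 1 + ε := by linarith
  have hd0 : 0 < d := by positivity
  have hd2 : d ≤ 1/2 := by
    rw [hd_def, div_le_iff₀ (by positivity)]; linarith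
  set M : ℝ := 4 * K / (d ^ 2 * Real.exp 2) with hM_def
  have hM0 : 0 < M := by
    apply div_pos (by linarith)
    exact mul_pos (by positivity) (Real.exp_pos 2)
  refine ⟨K/2, K + M/d, 8, by linarith, by have := div_pos hM0 hd0; linarith, by norm_num, ?_⟩
  intro Ω m0 μ hprob ℱ n X hn hmeas hint hsup hexpint hexpcond x
  haveI := hprob
  have hn0 : (0:ℝ) < (n:ℝ) := by exact_mod_cast hn
  have hnn : (0:ℝ) ≤ (n:ℝ) := hn0.le
  have hset : {ω | (∑ i ∈ Finset.Icc 1 n, X i ω) / n > x}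
      = {ω | x * (n:ℝ) < ∑ i ∈ Finset.Icc 1 n, X i ω} := by
    ext ω
    simp only [Set.mem_setOf_eq, gt_iff_lt]
    rw [lt_div_iff₀ hn0]
  refine ⟨?_, ?_, ?_⟩
  · -- small x regime
    intro hx hx0
    set l : ℝ := x / (2 * K * (1 + ε)) with hl_def
    have hl0 : 0 ≤ l := by positivity
    have hl4 : l ≤ 1/4 := by
      rw [hl_def, div_le_iff₀ (by positivity)]
      nlinarith
    have hl1 : l < 1 := by linarith
    rw [hset]
    refine (master_bound μ ℱ n X K hK hmeas hint hsup hexpint hexpcond l hl0 hl1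
      (x * n)).trans ?_
    apply ENNReal.ofReal_le_ofReal
    apply Real.exp_le_exp.mpr
    have hc := c_le_sq l hl0 hl4
    have hA : 4 * l ^ 2 / ((1 - l) ^ 2 * Real.exp 2) * K - l * x
        ≤ -(x ^ 2 / (4 * K * (1 + ε))) := by
      have h1 : 4 * l ^ 2 / ((1 - l) ^ 2 * Real.exp 2) * K ≤ l ^ 2 * K :=
        mul_le_mul_of_nonneg_right hc hK.le
      have hlx : l * (2 * K * (1 + ε)) = x := by
        rw [hl_def]; field_simp
      have h2 : l ^ 2 * K - l * x ≤ -(x ^ 2 / (4 * K * (1 + ε))) := by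
        rw [← hlx]
        have hRHS : (l * (2 * K * (1 + ε))) ^ 2 / (4 * K * (1 + ε)) = l ^ 2 * (K * (1 + ε)) := by
          field_simp
          ring
        rw [hRHS]
        nlinarith [mul_nonneg (mul_nonneg (sq_nonneg l) hK.le) hε.le]
      linarith
    calc (↑n:ℝ) * (4 * l ^ 2 / ((1 - l) ^ 2 * Real.exp 2) * K) - l * (x * ↑n)
        = ↑n * (4 * l ^ 2 / ((1 - l) ^ 2 * Real.exp 2) * K - l * x) := by ring
      _ ≤ ↑n * (-(x ^ 2 / (4 * K * (1 + ε)))) := mul_le_mul_of_nonneg_left hA hnn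
      _ = -(↑n * x ^ 2 / (4 * K * (1 + ε))) := by ring
  · -- middle regime
    intro hx0 _
    have hx : K / 2 ≤ x := hx0
    set l : ℝ := (1/4 : ℝ) with hl_def
    have hl0 : (0:ℝ) ≤ l := by norm_num
    have hl1 : l < 1 := by norm_num
    rw [hset]
    refine (master_bound μ ℱ n X K hK hmeas hint hsup hexpint hexpcond l hl0 hl1
      (x * n)).trans ?_
    apply ENNReal.ofReal_le_ofReal
    apply Real.exp_le_exp.mpr
    have hA : 4 * l ^ 2 / ((1 - l) ^ 2 * Real.exp 2) * K - l * x ≤ -(x / 8) := by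
      have hc := c_le_sq l hl0 (le_refl _)
      have h1 : 4 * l ^ 2 / ((1 - l) ^ 2 * Real.exp 2) * K ≤ l ^ 2 * K :=
        mul_le_mul_of_nonneg_right hc hK.le
      have h2 : l ^ 2 * K = K / 16 := by rw [hl_def]; ring
      have h3 : l * x = x / 4 := by rw [hl_def]; ring
      linarith [h1, h2.le, h2.ge, h3.le, h3.ge, hx]
    calc (↑n:ℝ) * (4 * l ^ 2 / ((1 - l) ^ 2 * Real.exp 2) * K) - l * (x * ↑n)
        = ↑n * (4 * l ^ 2 / ((1 - l) ^ 2 * Real.exp 2) * K - l * x) := by ring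
      _ ≤ ↑n * (-(x / 8)) := mul_le_mul_of_nonneg_left hA hnn
      _ = -(↑n * x / 8) := by ring
  · -- large x regime
    intro hx1
    set l : ℝ := 1 - d with hl_def
    have hl0 : 0 ≤ l := by rw [hl_def]; linarith
    have hl1 : l < 1 := by rw [hl_def]; linarith
    rw [hset]
    refine (master_bound μ ℱ n X K hK hmeas hint hsup hexpint hexpcond l hl0 hl1
      (x * n)).trans ?_
    apply ENNReal.ofReal_le_ofReal
    apply Real.exp_le_exp.mpr
    have hA : 4 * l ^ 2 / ((1 - l) ^ 2 * Real.exp 2) * K - l * x ≤ -(x / (1 + ε)) := by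
      have h1l : 1 - l = d := by rw [hl_def]; ring
      rw [h1l]
      have hxM : M ≤ d * x := by
        have h1 : M / d ≤ x := by
          have : M / d ≤ K + M / d := by linarith
          linarith
        have h2 := mul_le_mul_of_nonneg_right h1 hd0.le
        rw [div_mul_cancel₀ _ hd0.ne'] at h2
        linarith
      have hcK : 4 * l ^ 2 / (d ^ 2 * Real.exp 2) * K ≤ M := by
        rw [hM_def]
        have hD : (0:ℝ) < d ^ 2 * Real.exp 2 :=
          mul_pos (pow_pos hd0 2) (Real.exp_pos 2)
        rw [div_mul_eq_mul_div, div_le_div_iff₀ hD hD]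
        have hl2 : l ^ 2 ≤ 1 := by rw [hl_def]; nlinarith
        have hstep := mul_le_mul_of_nonneg_right
          (mul_le_mul_of_nonneg_right hl2 hK.le) hD.le
        nlinarith [hstep]
      have hgap : (1 / (1 + ε) : ℝ) = 1 - 2 * d := by
        rw [hd_def]; field_simp; ring
      have hx_eq : x / (1 + ε) = x * (1 - 2 * d) := by
        rw [div_eq_mul_one_div, hgap]
      -- l*x = (1-d)*x ; need cK ≤ l*x - x/(1+ε) = (1-d)x - (1-2d)x = d*x
      have hxd : l * x - x / (1 + ε) = d * x := by
        rw [hx_eq, hl_def]; ring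
      linarith [hcK, hxM]
    calc (↑n:ℝ) * (4 * l ^ 2 / ((1 - l) ^ 2 * Real.exp 2) * K) - l * (x * ↑n)
        = ↑n * (4 * l ^ 2 / ((1 - l) ^ 2 * Real.exp 2) * K - l * x) := by ring
      _ ≤ ↑n * (-(x / (1 + ε))) := mul_le_mul_of_nonneg_left hA hnn
      _ = -(↑n * x / (1 + ε)) := by ring
end

section
/- Let X be a real-valued random variable with E[X] ≤ 0 and E[exp(|X|)] ≤ K for some K > 0. Then for all t ∈ (0,1), E[exp(tX)] ≤ exp(K t²/(1−t)). Consequently, E[exp(tX)] ≤ exp(2K t²) for every t ∈ (0, 1/2]. -/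
open MeasureTheory ProbabilityTheory Filter

private lemma pow_div_fact_le_exp {u : ℝ} (hu : 0 ≤ u) (m : ℕ) :
    u ^ m / m.factorial ≤ Real.exp u := by
  rw [Real.exp_eq_exp_ℝ, NormedSpace.exp_eq_tsum_div]
  exact Summable.le_tsum (Real.summable_pow_div_factorial u) m (fun n _ => by positivity)

private lemma key_ineq {t : ℝ} (ht0 : 0 < t) (ht1 : t < 1) (x : ℝ) :
    Real.exp (t * x) ≤ 1 + t * x + t ^ 2 / (1 - t) * Real.exp |x| := by
  have hsum : Summable (fun n : ℕ => (t * x) ^ n / n.factorial) :=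
    Real.summable_pow_div_factorial _
  have hgeo : Summable (fun n : ℕ => t ^ 2 * Real.exp |x| * t ^ n) :=
    (summable_geometric_of_lt_one ht0.le ht1).mul_left _
  have hexp : Real.exp (t * x) = ∑' n : ℕ, (t * x) ^ n / n.factorial := by
    rw [Real.exp_eq_exp_ℝ, NormedSpace.exp_eq_tsum_div]
  have hsplit := Summable.sum_add_tsum_nat_add 2 hsum
  have htail : (∑' n : ℕ, (t * x) ^ (n + 2) / (n + 2).factorial) ≤
      ∑' n : ℕ, t ^ 2 * Real.exp |x| * t ^ n := by
    refine Summable.tsum_le_tsum (fun n => ?_)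
      (by exact_mod_cast hsum.comp_injective (add_left_injective 2)) hgeo
    calc (t * x) ^ (n + 2) / (n + 2).factorial
        ≤ |(t * x) ^ (n + 2) / (n + 2).factorial| := le_abs_self _
      _ = t ^ (n + 2) * (|x| ^ (n + 2) / (n + 2).factorial) := by
          rw [abs_div, abs_pow, abs_mul, abs_of_pos ht0, mul_pow, Nat.abs_cast, mul_div_assoc]
      _ ≤ t ^ (n + 2) * Real.exp |x| :=
          mul_le_mul_of_nonneg_left (pow_div_fact_le_exp (abs_nonneg x) _) (by positivity)
      _ = t ^ 2 * Real.exp |x| * t ^ n := by ring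
  have hgeoval : (∑' n : ℕ, t ^ 2 * Real.exp |x| * t ^ n) = t ^ 2 / (1 - t) * Real.exp |x| := by
    rw [tsum_mul_left, tsum_geometric_of_lt_one ht0.le ht1]
    field_simp
  have h2 : (∑ i ∈ Finset.range 2, (t * x) ^ i / (i.factorial : ℝ)) = 1 + t * x := by
    simp [Finset.sum_range_succ]
  rw [hexp, ← hsplit, h2]
  linarith [htail, hgeoval ▸ htail]

/-- Lemma 2.5: if `E[X] ≤ 0` and `E[exp |X|] ≤ K`, then the Laplace transform of `X`
satisfies `E[exp (t X)] ≤ exp (K t² / (1 - t))` for `t ∈ (0,1)`, and consequently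
`E[exp (t X)] ≤ exp (2 K t²)` for `t ∈ (0, 1/2]`. -/
theorem laplace_transform_bound_of_exponential_moment
    {Ω : Type*} {m0 : MeasurableSpace Ω} (μ : Measure Ω) [IsProbabilityMeasure μ]
    (X : Ω → ℝ) (K : ℝ) (hK : 0 < K)
    (hmeas : Measurable X) (hint : Integrable X μ)
    (hmean : (∫ ω, X ω ∂μ) ≤ 0)
    (hexp : (∫⁻ ω, ENNReal.ofReal (Real.exp |X ω|) ∂μ) ≤ ENNReal.ofReal K) :
    (∀ t : ℝ, t ∈ Set.Ioo (0 : ℝ) 1 →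
      (∫⁻ ω, ENNReal.ofReal (Real.exp (t * X ω)) ∂μ) ≤
        ENNReal.ofReal (Real.exp (K * t ^ 2 / (1 - t)))) ∧
    (∀ t : ℝ, t ∈ Set.Ioc (0 : ℝ) (1 / 2) →
      (∫⁻ ω, ENNReal.ofReal (Real.exp (t * X ω)) ∂μ) ≤
        ENNReal.ofReal (Real.exp (2 * K * t ^ 2))) := by
  -- integrability of exp |X|
  have hmeasE : AEStronglyMeasurable (fun ω => Real.exp |X ω|) μ :=
    (hmeas.abs.exp).aestronglyMeasurable
  have hExpInt : Integrable (fun ω => Real.exp |X ω|) μ := by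
    refine ⟨hmeasE, ?_⟩
    rw [hasFiniteIntegral_iff_ofReal (Filter.Eventually.of_forall fun ω => (Real.exp_pos _).le)]
    exact lt_of_le_of_lt hexp ENNReal.ofReal_lt_top
  have hExpK : (∫ ω, Real.exp |X ω| ∂μ) ≤ K := by
    have := ofReal_integral_eq_lintegral_ofReal hExpInt
      (Filter.Eventually.of_forall fun ω => (Real.exp_pos _).le)
    rw [← this] at hexp
    exact (ENNReal.ofReal_le_ofReal_iff hK.le).mp hexp
  have main : ∀ t : ℝ, t ∈ Set.Ioo (0 : ℝ) 1 →
      (∫⁻ ω, ENNReal.ofReal (Real.exp (t * X ω)) ∂μ) ≤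
        ENNReal.ofReal (Real.exp (K * t ^ 2 / (1 - t))) := by
    rintro t ⟨ht0, ht1⟩
    have htpos : (0:ℝ) < 1 - t := by linarith
    -- integrability of exp (t X)
    have htXmeas : AEStronglyMeasurable (fun ω => Real.exp (t * X ω)) μ :=
      ((hmeas.const_mul t).exp).aestronglyMeasurable
    have htXint : Integrable (fun ω => Real.exp (t * X ω)) μ := by
      refine hExpInt.mono htXmeas (Filter.Eventually.of_forall fun ω => ?_)
      rw [Real.norm_eq_abs, Real.norm_eq_abs, abs_of_pos (Real.exp_pos _),
        abs_of_pos (Real.exp_pos _)]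
      apply Real.exp_le_exp.mpr
      calc t * X ω ≤ |t * X ω| := le_abs_self _
        _ = t * |X ω| := by rw [abs_mul, abs_of_pos ht0]
        _ ≤ 1 * |X ω| := mul_le_mul_of_nonneg_right ht1.le (abs_nonneg _)
        _ = |X ω| := one_mul _
    -- real integral bound
    have hIle : (∫ ω, Real.exp (t * X ω) ∂μ) ≤ 1 + t ^ 2 / (1 - t) * K := by
      have hRHSint : Integrable (fun ω => 1 + t * X ω + t ^ 2 / (1 - t) * Real.exp |X ω|) μ :=
        ((integrable_const (1:ℝ)).add (hint.const_mul t)).add (hExpInt.const_mul _)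
      calc (∫ ω, Real.exp (t * X ω) ∂μ)
          ≤ ∫ ω, (1 + t * X ω + t ^ 2 / (1 - t) * Real.exp |X ω|) ∂μ :=
            integral_mono htXint hRHSint (fun ω => key_ineq ht0 ht1 (X ω))
        _ = 1 + t * (∫ ω, X ω ∂μ) + t ^ 2 / (1 - t) * (∫ ω, Real.exp |X ω| ∂μ) := by
            have := integral_add ((integrable_const (1:ℝ)).add (hint.const_mul t))
              (hExpInt.const_mul (t ^ 2 / (1 - t)))
            have h2 := integral_add (integrable_const (1:ℝ)) (hint.const_mul t)
            simp only [Pi.add_apply] at this h2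
            rw [this, h2, integral_const, integral_const_mul, integral_const_mul]
            simp
        _ ≤ 1 + t ^ 2 / (1 - t) * K := by
            have h1 : t * (∫ ω, X ω ∂μ) ≤ 0 := mul_nonpos_of_nonneg_of_nonpos ht0.le hmean
            have h2 : t ^ 2 / (1 - t) * (∫ ω, Real.exp |X ω| ∂μ) ≤ t ^ 2 / (1 - t) * K :=
              mul_le_mul_of_nonneg_left hExpK (by positivity)
            linarith
    have hfinal : (∫ ω, Real.exp (t * X ω) ∂μ) ≤ Real.exp (K * t ^ 2 / (1 - t)) := by
      refine hIle.trans ?_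
      have := Real.add_one_le_exp (K * t ^ 2 / (1 - t))
      have heq : t ^ 2 / (1 - t) * K = K * t ^ 2 / (1 - t) := by ring
      linarith [heq ▸ (le_refl (t ^ 2 / (1 - t) * K))]
    rw [← ofReal_integral_eq_lintegral_ofReal htXint
      (Filter.Eventually.of_forall fun ω => (Real.exp_pos _).le)]
    exact ENNReal.ofReal_le_ofReal hfinal
  refine ⟨main, fun t ⟨ht0, ht2⟩ => ?_⟩
  have ht1 : t < 1 := lt_of_le_of_lt ht2 (by norm_num)
  refine (main t ⟨ht0, ht1⟩).trans (ENNReal.ofReal_le_ofReal (Real.exp_le_exp.mpr ?_))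
  rw [div_le_iff₀ (by linarith)]
  nlinarith [sq_nonneg t, mul_pos hK (pow_pos ht0 2)]
end

section
/- For all constants K > 0 and x > 0, the supremum over t ∈ (0,1) of (t x − K t²/(1−t)) equals (√(x+K) − √K)². -/
/-- Lemma 2.6: the Legendre-type supremum `sup_{t ∈ (0,1)} (t x - K t² / (1 - t))`
equals `(√(x + K) - √K)²` for all `K, x > 0`. -/
theorem sup_legendre_bernstein (K x : ℝ) (hK : 0 < K) (hx : 0 < x) :
    sSup ((fun t => t * x - K * t ^ 2 / (1 - t)) '' Set.Ioo (0 : ℝ) 1) =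
      (Real.sqrt (x + K) - Real.sqrt K) ^ 2 := by
  set s := Real.sqrt (x + K) with hs_def
  set k := Real.sqrt K with hk_def
  have hk : 0 < k := Real.sqrt_pos.mpr hK
  have hs2 : s ^ 2 = x + K := Real.sq_sqrt (by linarith)
  have hk2 : k ^ 2 = K := Real.sq_sqrt hK.le
  have hks : k < s := by
    apply Real.sqrt_lt_sqrt hK.le; linarith
  have hs : 0 < s := hk.trans hks
  set t0 : ℝ := (s - k) / s with ht0_def
  have ht0 : t0 ∈ Set.Ioo (0 : ℝ) 1 := by
    constructor
    · apply div_pos (by linarith) hs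
    · rw [div_lt_one hs]; linarith
  have h1t0 : 1 - t0 = k / s := by
    rw [ht0_def]; field_simp; ring
  have hval : t0 * x - K * t0 ^ 2 / (1 - t0) = (s - k) ^ 2 := by
    rw [h1t0, ht0_def]
    have hx' : x = s ^ 2 - k ^ 2 := by linarith
    field_simp
    rw [hx', ← hk2]; ring
  have hub : ∀ y ∈ (fun t => t * x - K * t ^ 2 / (1 - t)) '' Set.Ioo (0 : ℝ) 1,
      y ≤ (s - k) ^ 2 := by
    rintro y ⟨t, ⟨ht1, ht2⟩, rfl⟩
    have h1t : 0 < 1 - t := by linarith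
    have key : t * x - (s - k) ^ 2 ≤ K * t ^ 2 / (1 - t) := by
      rw [le_div_iff₀ h1t]
      nlinarith [sq_nonneg (s * t - (s - k)), hs2, hk2]
    linarith
  apply le_antisymm
  · exact csSup_le ⟨_, ⟨t0, ht0, rfl⟩⟩ hub
  · exact le_csSup ⟨_, hub⟩ ⟨t0, ht0, hval⟩
end

section
/- Let X be a real random variable such that E[exp(R X²)] ≤ K for some constants K, R > 0. Then for all t > 0, E[exp(t|X|)] ≤ 1 + (K√π/(2√R)) t exp(t²/(4R)). If additionally E[X] ≤ 0, then there exists a > 0, depending only on K and R, such that E[exp(tX)] ≤ exp(a t²/2) for all t > 0. -/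
open MeasureTheory ProbabilityTheory Filter

private lemma key_pointwise {τ s : ℝ} (hτ : 0 < τ) (hs : 0 ≤ s) :
    Real.exp (τ * s) ≤ 1 + Real.sqrt Real.pi / 2 * τ * Real.exp (τ ^ 2 / 4) * Real.exp (s ^ 2) := by
  set C := Real.sqrt Real.pi with hCdef
  have hC2 : C ^ 2 = Real.pi := Real.sq_sqrt Real.pi_nonneg
  have hCpos : 0 < C := Real.sqrt_pos.mpr Real.pi_pos
  have hπ : (3 : ℝ) < Real.pi := Real.pi_gt_three
  have hE1 : 0 < Real.exp (τ ^ 2 / 4) := Real.exp_pos _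
  have hE2 : 0 < Real.exp (s ^ 2) := Real.exp_pos _
  rcases le_or_gt 2 (C * τ) with hcase | hcase
  · have hts : τ * s ≤ τ ^ 2 / 4 + s ^ 2 := by nlinarith [sq_nonneg (τ / 2 - s)]
    have h1 : Real.exp (τ * s) ≤ Real.exp (τ ^ 2 / 4) * Real.exp (s ^ 2) := by
      rw [← Real.exp_add]; exact Real.exp_le_exp.mpr hts
    have h2 : (1 : ℝ) ≤ C / 2 * τ := by linarith
    nlinarith [mul_pos hE1 hE2]
  · have he : (s - τ / 2) ^ 2 + 1 ≤ Real.exp ((s - τ / 2) ^ 2) := Real.add_one_le_exp _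
    have hw : s ≤ C / 2 * Real.exp ((s - τ / 2) ^ 2) := by
      have h5 : s ≤ C / 2 * ((s - τ / 2) ^ 2 + 1) := by
        nlinarith [sq_nonneg (C * (s - τ / 2) - 1)]
      calc s ≤ C / 2 * ((s - τ / 2) ^ 2 + 1) := h5
        _ ≤ C / 2 * Real.exp ((s - τ / 2) ^ 2) := by
            apply mul_le_mul_of_nonneg_left he (by positivity)
    have hx : Real.exp (τ * s) - 1 ≤ τ * s * Real.exp (τ * s) := by
      have h1 := Real.add_one_le_exp (-(τ * s))
      have h2 : Real.exp (τ * s) * Real.exp (-(τ * s)) = 1 := by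
        rw [← Real.exp_add]; simp
      nlinarith [Real.exp_pos (τ * s),
        mul_le_mul_of_nonneg_left h1 (Real.exp_pos (τ * s)).le]
    have hsplit : Real.exp (τ * s) * Real.exp ((s - τ / 2) ^ 2)
        = Real.exp (τ ^ 2 / 4) * Real.exp (s ^ 2) := by
      rw [← Real.exp_add, ← Real.exp_add]; ring_nf
    have h3 : τ * s ≤ τ * (C / 2 * Real.exp ((s - τ / 2) ^ 2)) :=
      mul_le_mul_of_nonneg_left hw hτ.le
    have h4 := mul_le_mul_of_nonneg_right h3 (Real.exp_pos (τ * s)).le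
    have h6 : τ * (C / 2 * Real.exp ((s - τ / 2) ^ 2)) * Real.exp (τ * s)
        = C / 2 * τ * (Real.exp (τ * s) * Real.exp ((s - τ / 2) ^ 2)) := by ring
    rw [h6, hsplit] at h4
    have : C / 2 * τ * (Real.exp (τ ^ 2 / 4) * Real.exp (s ^ 2))
        = C / 2 * τ * Real.exp (τ ^ 2 / 4) * Real.exp (s ^ 2) := by ring
    linarith [this ▸ h4]

private lemma key_pointwise_R {R t u : ℝ} (hR : 0 < R) (ht : 0 < t) (hu : 0 ≤ u) :
    Real.exp (t * u) ≤ 1 + Real.sqrt Real.pi / (2 * Real.sqrt R) * t *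
      Real.exp (t ^ 2 / (4 * R)) * Real.exp (R * u ^ 2) := by
  have hsR : 0 < Real.sqrt R := Real.sqrt_pos.mpr hR
  have hsq : Real.sqrt R ^ 2 = R := Real.sq_sqrt hR.le
  have h := key_pointwise (τ := t / Real.sqrt R) (s := Real.sqrt R * u)
    (by positivity) (by positivity)
  have e1 : t / Real.sqrt R * (Real.sqrt R * u) = t * u := by
    field_simp
  have e2 : (t / Real.sqrt R) ^ 2 / 4 = t ^ 2 / (4 * R) := by
    rw [div_pow, hsq]; ring
  have e3 : (Real.sqrt R * u) ^ 2 = R * u ^ 2 := by rw [mul_pow, hsq]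
  have e4 : Real.sqrt Real.pi / 2 * (t / Real.sqrt R)
      = Real.sqrt Real.pi / (2 * Real.sqrt R) * t := by
    field_simp
  rw [e1, e2, e3, e4] at h
  exact h

private lemma hasDerivAt_quad (z : ℝ) :
    HasDerivAt (fun z : ℝ => 1 + z + z ^ 2 / 2) (1 + z) z := by
  have h1 : HasDerivAt (fun z : ℝ => z ^ 2 / 2) z z := by
    simpa using (hasDerivAt_pow 2 z).div_const 2
  have h2 := (((hasDerivAt_const z (1 : ℝ)).add (hasDerivAt_id z)).add h1)
  simp only [zero_add] at h2
  exact h2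

private lemma exp_le_quad_of_nonpos {y : ℝ} (hy : y ≤ 0) :
    Real.exp y ≤ 1 + y + y ^ 2 / 2 := by
  have hmono : Antitone (fun z : ℝ => 1 + z + z ^ 2 / 2 - Real.exp z) := by
    have hd : ∀ z : ℝ, HasDerivAt (fun z : ℝ => 1 + z + z ^ 2 / 2 - Real.exp z)
        (1 + z - Real.exp z) z := fun z => (hasDerivAt_quad z).sub (Real.hasDerivAt_exp z)
    apply antitone_of_deriv_nonpos (fun z => (hd z).differentiableAt)
    intro z
    rw [(hd z).deriv]
    linarith [Real.add_one_le_exp z]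
  have := hmono hy
  simp only [Real.exp_zero] at this
  linarith

private lemma exp_le_taylor_of_nonneg {y : ℝ} (hy : 0 ≤ y) :
    Real.exp y ≤ 1 + y + y ^ 2 / 2 * Real.exp y := by
  have hd : ∀ z : ℝ, HasDerivAt (fun z : ℝ => (1 + z) * Real.exp (-z) + z ^ 2 / 2)
      (z - z * Real.exp (-z)) z := by
    intro z
    have he : HasDerivAt (fun z : ℝ => Real.exp (-z)) (-Real.exp (-z)) z := by
      have h2 := (Real.hasDerivAt_exp (-z)).comp z (hasDerivAt_neg z)
      simp only [mul_neg, mul_one] at h2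
      exact h2
    have h1 := (((hasDerivAt_const z (1 : ℝ)).add (hasDerivAt_id z)).mul he).add
      ((by simpa using (hasDerivAt_pow 2 z).div_const 2 : HasDerivAt (fun z : ℝ => z ^ 2 / 2) z z))
    simp only [Pi.add_apply, id_eq] at h1
    exact h1.congr_deriv (by ring)
  have hmono : MonotoneOn (fun z : ℝ => (1 + z) * Real.exp (-z) + z ^ 2 / 2) (Set.Ici 0) := by
    apply monotoneOn_of_deriv_nonneg (convex_Ici 0)
    · exact Continuous.continuousOn (by continuity)
    · exact fun z _ => (hd z).differentiableAt.differentiableWithinAt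
    · intro z hz
      rw [interior_Ici] at hz
      rw [(hd z).deriv]
      have h1 : Real.exp (-z) ≤ 1 := Real.exp_le_one_iff.mpr (by linarith [hz.out])
      nlinarith [hz.out, Real.exp_pos (-z)]
  have h := hmono Set.self_mem_Ici hy hy
  simp only [add_zero, Real.exp_zero, mul_one, ne_eq, OfNat.ofNat_ne_zero,
    not_false_eq_true, zero_pow, zero_div, neg_zero] at h
  -- h : 1 ≤ (1 + y) * Real.exp (-y) + y ^ 2 / 2
  have h2 : (1 + y) * Real.exp (-y) * Real.exp y = 1 + y := by
    rw [mul_assoc, ← Real.exp_add]; simp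
  have h3 := mul_le_mul_of_nonneg_right h (Real.exp_pos y).le
  rw [one_mul, add_mul, h2] at h3
  linarith

private lemma exp_le_taylor (y : ℝ) : Real.exp y ≤ 1 + y + y ^ 2 / 2 * Real.exp |y| := by
  rcases le_or_gt y 0 with h | h
  · have h1 := exp_le_quad_of_nonpos h
    have h2 : (1 : ℝ) ≤ Real.exp |y| := Real.one_le_exp (abs_nonneg y)
    nlinarith [sq_nonneg y]
  · rw [abs_of_pos h]; exact exp_le_taylor_of_nonneg h.le

/-- Lemma 2.8: if `E[exp (R X²)] ≤ K`, then `E[exp (t |X|)] ≤ 1 + (K √π / (2 √R)) t exp (t² / (4R))`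
for all `t > 0`; if moreover `E[X] ≤ 0`, then `E[exp (t X)] ≤ exp (a t² / 2)` for all `t > 0`,
with `a > 0` depending only on `K` and `R`. -/
theorem laplace_bound_of_square_exponential_moment (K R : ℝ) (hK : 0 < K) (hR : 0 < R) :
    (∀ {Ω : Type*} {m0 : MeasurableSpace Ω} (μ : Measure Ω), IsProbabilityMeasure μ →
      ∀ (X : Ω → ℝ), Measurable X →
        (∫⁻ ω, ENNReal.ofReal (Real.exp (R * (X ω) ^ 2)) ∂μ) ≤ ENNReal.ofReal K →
        ∀ t : ℝ, 0 < t →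
          (∫⁻ ω, ENNReal.ofReal (Real.exp (t * |X ω|)) ∂μ) ≤
            ENNReal.ofReal (1 + K * Real.sqrt Real.pi / (2 * Real.sqrt R) * t *
              Real.exp (t ^ 2 / (4 * R)))) ∧
    (∃ a : ℝ, 0 < a ∧
      ∀ {Ω : Type*} {m0 : MeasurableSpace Ω} (μ : Measure Ω), IsProbabilityMeasure μ →
      ∀ (X : Ω → ℝ), Measurable X → Integrable X μ → (∫ ω, X ω ∂μ) ≤ 0 →
        (∫⁻ ω, ENNReal.ofReal (Real.exp (R * (X ω) ^ 2)) ∂μ) ≤ ENNReal.ofReal K →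
        ∀ t : ℝ, 0 < t →
          (∫⁻ ω, ENNReal.ofReal (Real.exp (t * X ω)) ∂μ) ≤
            ENNReal.ofReal (Real.exp (a * t ^ 2 / 2))) := by
  constructor
  · intro Ω m0 μ hμ X hX hXK t ht
    set c : ℝ := Real.sqrt Real.pi / (2 * Real.sqrt R) * t * Real.exp (t ^ 2 / (4 * R)) with hc
    have hsR : 0 < Real.sqrt R := Real.sqrt_pos.mpr hR
    have hc0 : 0 ≤ c := by positivity
    have hgmeas : Measurable fun ω => ENNReal.ofReal (Real.exp (R * X ω ^ 2)) :=
      (Real.measurable_exp.comp ((hX.pow_const 2).const_mul R)).ennreal_ofReal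
    calc ∫⁻ ω, ENNReal.ofReal (Real.exp (t * |X ω|)) ∂μ
        ≤ ∫⁻ ω, (ENNReal.ofReal 1
            + ENNReal.ofReal c * ENNReal.ofReal (Real.exp (R * X ω ^ 2))) ∂μ := by
          apply lintegral_mono
          intro ω
          have hpt := key_pointwise_R hR ht (abs_nonneg (X ω))
          rw [sq_abs] at hpt
          calc ENNReal.ofReal (Real.exp (t * |X ω|))
              ≤ ENNReal.ofReal (1 + c * Real.exp (R * X ω ^ 2)) := by
                apply ENNReal.ofReal_le_ofReal
                calc Real.exp (t * |X ω|) ≤ 1 + Real.sqrt Real.pi / (2 * Real.sqrt R) * t *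
                      Real.exp (t ^ 2 / (4 * R)) * Real.exp (R * X ω ^ 2) := hpt
                  _ = 1 + c * Real.exp (R * X ω ^ 2) := by rw [hc]
            _ = ENNReal.ofReal 1 + ENNReal.ofReal c * ENNReal.ofReal (Real.exp (R * X ω ^ 2)) := by
                rw [ENNReal.ofReal_add zero_le_one (by positivity), ENNReal.ofReal_mul hc0]
      _ = ENNReal.ofReal 1 * μ Set.univ
          + ENNReal.ofReal c * ∫⁻ ω, ENNReal.ofReal (Real.exp (R * X ω ^ 2)) ∂μ := by
          rw [lintegral_add_left measurable_const, lintegral_const, lintegral_const_mul _ hgmeas]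
      _ ≤ ENNReal.ofReal 1 + ENNReal.ofReal c * ENNReal.ofReal K := by
          rw [measure_univ, mul_one]
          exact add_le_add_right (mul_le_mul_right hXK _) _
      _ = ENNReal.ofReal (1 + K * Real.sqrt Real.pi / (2 * Real.sqrt R) * t *
            Real.exp (t ^ 2 / (4 * R))) := by
          rw [← ENNReal.ofReal_mul hc0, ← ENNReal.ofReal_add zero_le_one (by positivity)]
          congr 1
          rw [hc]; ring
  · refine ⟨(8 * K + 1) / R, by positivity, ?_⟩
    intro Ω m0 μ hμ X hX hXint hXmean hXK t ht
    set a : ℝ := (8 * K + 1) / R with ha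
    have hgmeas0 : Measurable fun ω => Real.exp (R * X ω ^ 2) :=
      ((hX.pow_const 2).const_mul R).exp
    have hg_int : Integrable (fun ω => Real.exp (R * X ω ^ 2)) μ := by
      refine ⟨hgmeas0.aestronglyMeasurable, ?_⟩
      rw [hasFiniteIntegral_iff_ofReal (Eventually.of_forall fun ω => (Real.exp_pos _).le)]
      exact lt_of_le_of_lt hXK ENNReal.ofReal_lt_top
    have hgK : ∫ ω, Real.exp (R * X ω ^ 2) ∂μ ≤ K := by
      have h1 := ofReal_integral_eq_lintegral_ofReal hg_int
        (Eventually.of_forall fun ω => (Real.exp_pos _).le)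
      rw [← h1] at hXK
      exact (ENNReal.ofReal_le_ofReal_iff hK.le).mp hXK
    have hdom : ∀ ω, Real.exp (t * X ω)
        ≤ Real.exp (t ^ 2 / (4 * R)) * Real.exp (R * X ω ^ 2) := by
      intro ω
      rw [← Real.exp_add]
      apply Real.exp_le_exp.mpr
      have h1 : t * X ω ≤ t * |X ω| := mul_le_mul_of_nonneg_left (le_abs_self _) ht.le
      have h2 : t * |X ω| ≤ t ^ 2 / (4 * R) + R * X ω ^ 2 := by
        rw [← sub_nonneg]
        have hx2 : X ω ^ 2 = |X ω| ^ 2 := (sq_abs _).symm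
        have heq : t ^ 2 / (4 * R) + R * |X ω| ^ 2 - t * |X ω|
            = (t - 2 * R * |X ω|) ^ 2 / (4 * R) := by
          field_simp; ring_nf
        rw [hx2, heq]; positivity
      linarith
    have ht_int : Integrable (fun ω => Real.exp (t * X ω)) μ := by
      apply Integrable.mono' (hg_int.const_mul (Real.exp (t ^ 2 / (4 * R))))
        ((hX.const_mul t).exp.aestronglyMeasurable)
      exact Eventually.of_forall fun ω => by
        rw [Real.norm_eq_abs, abs_of_pos (Real.exp_pos _)]; exact hdom ω
    rcases le_or_gt t (Real.sqrt R) with hsmall | hbig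
    · -- small t
      have hb : ∀ ω, X ω ^ 2 * Real.exp (t * |X ω|)
          ≤ 2 * Real.exp 1 / R * Real.exp (R * X ω ^ 2) := by
        intro ω
        have hsq : (Real.sqrt R * |X ω|) ^ 2 = R * X ω ^ 2 := by
          rw [mul_pow, Real.sq_sqrt hR.le, sq_abs]
        have e1 : Real.exp (t * |X ω|) ≤ Real.exp (1 / 2) * Real.exp (R * X ω ^ 2 / 2) := by
          rw [← Real.exp_add]
          apply Real.exp_le_exp.mpr
          have h6 : t * |X ω| ≤ Real.sqrt R * |X ω| :=
            mul_le_mul_of_nonneg_right hsmall (abs_nonneg _)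
          nlinarith [sq_nonneg (Real.sqrt R * |X ω| - 1)]
        have e2 : X ω ^ 2 ≤ 2 / R * Real.exp (R * X ω ^ 2 / 2) := by
          have h7 := Real.add_one_le_exp (R * X ω ^ 2 / 2)
          have h8 : 2 / R * (R * X ω ^ 2 / 2 + 1) = X ω ^ 2 + 2 / R := by
            field_simp
          have h9 := mul_le_mul_of_nonneg_left h7 (by positivity : (0:ℝ) ≤ 2 / R)
          rw [h8] at h9
          have : 0 < 2 / R := by positivity
          linarith
        calc X ω ^ 2 * Real.exp (t * |X ω|)
            ≤ (2 / R * Real.exp (R * X ω ^ 2 / 2))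
              * (Real.exp (1 / 2) * Real.exp (R * X ω ^ 2 / 2)) :=
              mul_le_mul e2 e1 (Real.exp_pos _).le (by positivity)
          _ = 2 / R * Real.exp (1 / 2) * (Real.exp (R * X ω ^ 2 / 2) * Real.exp (R * X ω ^ 2 / 2)) := by
              ring
          _ = 2 / R * Real.exp (1 / 2) * Real.exp (R * X ω ^ 2) := by
              rw [← Real.exp_add]; ring_nf
          _ ≤ 2 * Real.exp 1 / R * Real.exp (R * X ω ^ 2) := by
              have h10 : Real.exp (1 / 2 : ℝ) ≤ Real.exp 1 := Real.exp_le_exp.mpr (by norm_num)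
              have h11 : 2 / R * Real.exp (1 / 2) ≤ 2 * Real.exp 1 / R := by
                have h12 : (2:ℝ) * Real.exp (1 / 2) ≤ 2 * Real.exp 1 := by linarith
                calc 2 / R * Real.exp (1 / 2) = 2 * Real.exp (1 / 2) / R := by ring
                  _ ≤ 2 * Real.exp 1 / R := (div_le_div_iff_of_pos_right hR).mpr h12
              exact mul_le_mul_of_nonneg_right h11 (Real.exp_pos _).le
      have hpt : ∀ ω, Real.exp (t * X ω) ≤ 1 + t * X ω
          + t ^ 2 / 2 * (2 * Real.exp 1 / R * Real.exp (R * X ω ^ 2)) := by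
        intro ω
        have h1 := exp_le_taylor (t * X ω)
        rw [abs_mul, abs_of_pos ht] at h1
        have hrw : (t * X ω) ^ 2 / 2 * Real.exp (t * |X ω|)
            = t ^ 2 / 2 * (X ω ^ 2 * Real.exp (t * |X ω|)) := by ring
        rw [hrw] at h1
        have h2 := mul_le_mul_of_nonneg_left (hb ω) (by positivity : (0:ℝ) ≤ t ^ 2 / 2)
        linarith
      have hint1 : Integrable (fun ω => t * X ω) μ := hXint.const_mul t
      have hint2 : Integrable (fun ω => 1 + t * X ω) μ := (integrable_const 1).add hint1
      have hint3 : Integrable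
          (fun ω => t ^ 2 / 2 * (2 * Real.exp 1 / R * Real.exp (R * X ω ^ 2))) μ :=
        (hg_int.const_mul (2 * Real.exp 1 / R)).const_mul (t ^ 2 / 2)
      have h_int_rhs : Integrable (fun ω => 1 + t * X ω
          + t ^ 2 / 2 * (2 * Real.exp 1 / R * Real.exp (R * X ω ^ 2))) μ := hint2.add hint3
      have hIle := integral_mono ht_int h_int_rhs hpt
      have hIval : ∫ ω, (1 + t * X ω
          + t ^ 2 / 2 * (2 * Real.exp 1 / R * Real.exp (R * X ω ^ 2))) ∂μ
          = 1 + t * (∫ ω, X ω ∂μ)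
            + t ^ 2 / 2 * (2 * Real.exp 1 / R * ∫ ω, Real.exp (R * X ω ^ 2) ∂μ) := by
        rw [integral_add hint2 hint3, integral_add (integrable_const 1) hint1,
          integral_const, integral_const_mul, integral_const_mul, integral_const_mul]
        simp [measure_univ]
      rw [hIval] at hIle
      have hmean : t * (∫ ω, X ω ∂μ) ≤ 0 := mul_nonpos_of_nonneg_of_nonpos ht.le hXmean
      have hterm : t ^ 2 / 2 * (2 * Real.exp 1 / R * ∫ ω, Real.exp (R * X ω ^ 2) ∂μ)
          ≤ t ^ 2 / 2 * (2 * Real.exp 1 / R * K) := by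
        gcongr
      have hfin : ∫ ω, Real.exp (t * X ω) ∂μ ≤ 1 + Real.exp 1 * K / R * t ^ 2 := by
        have : t ^ 2 / 2 * (2 * Real.exp 1 / R * K) = Real.exp 1 * K / R * t ^ 2 := by ring
        linarith [hIle, hmean, hterm, this]
      have hexp : (1 : ℝ) + Real.exp 1 * K / R * t ^ 2 ≤ Real.exp (a * t ^ 2 / 2) := by
        have h1 : Real.exp 1 * K / R * t ^ 2 + 1 ≤ Real.exp (Real.exp 1 * K / R * t ^ 2) :=
          Real.add_one_le_exp _
        have h2 : Real.exp 1 * K / R * t ^ 2 ≤ a * t ^ 2 / 2 := by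
          have hc : Real.exp 1 * K / R ≤ a / 2 := by
            rw [ha, div_div, div_le_div_iff₀ hR (by positivity)]
            have he3 : Real.exp 1 ≤ 3 := by nlinarith [Real.exp_one_lt_d9]
            nlinarith [he3, hK.le, hR.le, mul_pos hR hK]
          calc Real.exp 1 * K / R * t ^ 2 ≤ a / 2 * t ^ 2 :=
              mul_le_mul_of_nonneg_right hc (sq_nonneg t)
            _ = a * t ^ 2 / 2 := by ring
        linarith [Real.exp_le_exp.mpr h2]
      have hconv := ofReal_integral_eq_lintegral_ofReal ht_int
        (Eventually.of_forall fun ω => (Real.exp_pos _).le)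
      rw [← hconv]
      exact ENNReal.ofReal_le_ofReal (le_trans hfin hexp)
    · -- large t
      have hgmeas : Measurable fun ω => ENNReal.ofReal (Real.exp (R * X ω ^ 2)) :=
        hgmeas0.ennreal_ofReal
      have ht2 : R < t ^ 2 := by
        have := pow_lt_pow_left₀ hbig (Real.sqrt_nonneg R) two_ne_zero
        rwa [Real.sq_sqrt hR.le] at this
      calc ∫⁻ ω, ENNReal.ofReal (Real.exp (t * X ω)) ∂μ
          ≤ ∫⁻ ω, ENNReal.ofReal (Real.exp (t ^ 2 / (4 * R)))
              * ENNReal.ofReal (Real.exp (R * X ω ^ 2)) ∂μ := by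
            exact lintegral_mono fun ω =>
              le_trans (ENNReal.ofReal_le_ofReal (hdom ω))
                (le_of_eq (ENNReal.ofReal_mul (Real.exp_pos _).le))
        _ = ENNReal.ofReal (Real.exp (t ^ 2 / (4 * R)))
            * ∫⁻ ω, ENNReal.ofReal (Real.exp (R * X ω ^ 2)) ∂μ :=
            lintegral_const_mul _ hgmeas
        _ ≤ ENNReal.ofReal (Real.exp (t ^ 2 / (4 * R))) * ENNReal.ofReal K :=
            mul_le_mul_right hXK _
        _ = ENNReal.ofReal (Real.exp (t ^ 2 / (4 * R)) * K) :=
            (ENNReal.ofReal_mul (Real.exp_pos _).le).symm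
        _ ≤ ENNReal.ofReal (Real.exp (a * t ^ 2 / 2)) := by
            apply ENNReal.ofReal_le_ofReal
            have h1 : K ≤ Real.exp (K - 1) := by
              calc K = Real.exp (Real.log K) := (Real.exp_log hK).symm
                _ ≤ Real.exp (K - 1) := Real.exp_le_exp.mpr (Real.log_le_sub_one_of_pos hK)
            calc Real.exp (t ^ 2 / (4 * R)) * K
                ≤ Real.exp (t ^ 2 / (4 * R)) * Real.exp (K - 1) :=
                  mul_le_mul_of_nonneg_left h1 (Real.exp_pos _).le
              _ = Real.exp (t ^ 2 / (4 * R) + (K - 1)) := (Real.exp_add _ _).symm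
              _ ≤ Real.exp (a * t ^ 2 / 2) := by
                  apply Real.exp_le_exp.mpr
                  have heq : a * t ^ 2 / 2 - t ^ 2 / (4 * R) = (16 * K + 1) / (4 * R) * t ^ 2 := by
                    rw [ha]; field_simp; ring
                  have h2 : (16 * K + 1) / (4 * R) * R ≤ (16 * K + 1) / (4 * R) * t ^ 2 :=
                    mul_le_mul_of_nonneg_left ht2.le (by positivity)
                  have h3 : (16 * K + 1) / (4 * R) * R = (16 * K + 1) / 4 := by
                    field_simp
                  linarith [heq, h2, h3, hK]
end

section
/- Let (X_i)_{1≤i≤n} be any sequence of real random variables adapted to a filtration (F_i)_{1≤i≤n}, and suppose there exist constants Q > 1, R > 0 and K > 0 such that for all i ∈ {1,…,n}, almost surely E[exp(R|X_i|^Q) | F_{i-1}] ≤ K. Let ρ > 1 and τ > 0 satisfy 1/Q + 1/ρ = 1 and (ρτ)^{1/ρ}(QR)^{1/Q} = 1. Then for any τ_1 > τ, there exists t_1 > 0, depending only on K, Q, R and τ_1, such that E[exp(t|S_n|)] ≤ exp(n τ_1 t^ρ) for all t ≥ t_1, and P[|S_n|/n > x] ≤ exp(−n R_1 x^Q) for all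 x ≥ x_1 := ρ τ_1 t_1^{ρ−1}, where R_1 > 0 is the constant satisfying (ρτ_1)^{1/ρ}(Q R_1)^{1/Q} = 1. -/
open MeasureTheory ProbabilityTheory Filter
open scoped ENNReal

section helpers

lemma key_const {ρ Q σ R' : ℝ} (hρ : 0 < ρ) (hQ : 0 < Q) (hσ : 0 < σ) (hR' : 0 < R')
    (heq : (ρ * σ) ^ (1 / ρ) * (Q * R') ^ (1 / Q) = 1) :
    Q * R' * (ρ * σ) ^ (Q / ρ) = 1 := by
  have hρσ : 0 < ρ * σ := mul_pos hρ hσ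
  have hs : 0 < (ρ * σ) ^ (1 / ρ) := Real.rpow_pos_of_pos hρσ _
  have hQR : 0 < Q * R' := mul_pos hQ hR'
  have h1 : (Q * R') ^ (1 / Q) = ((ρ * σ) ^ (1 / ρ))⁻¹ := by
    field_simp
    rw [mul_comm] at heq
    linarith [heq]
  have h2 : ((Q * R') ^ (1 / Q)) ^ Q = Q * R' := by
    rw [← Real.rpow_mul hQR.le, one_div, inv_mul_cancel₀ hQ.ne', Real.rpow_one]
  have h3 : (((ρ * σ) ^ (1 / ρ))⁻¹) ^ Q = ((ρ * σ) ^ (Q / ρ))⁻¹ := by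
    rw [← Real.rpow_neg hρσ.le, ← Real.rpow_mul hρσ.le, ← Real.rpow_neg hρσ.le]
    congr 1
    ring
  have h4 : Q * R' = ((ρ * σ) ^ (Q / ρ))⁻¹ := by rw [← h2, h1, h3]
  rw [h4]
  have : (0:ℝ) < (ρ * σ) ^ (Q / ρ) := Real.rpow_pos_of_pos hρσ _
  field_simp

lemma young_bound {ρ Q σ R' : ℝ} (hρ : 1 < ρ) (hQ : 1 < Q)
    (hconj : 1 / Q + 1 / ρ = 1) (hσ : 0 < σ) (hR' : 0 < R')
    (heq : (ρ * σ) ^ (1 / ρ) * (Q * R') ^ (1 / Q) = 1) {t x : ℝ} (ht : 0 ≤ t) (hx : 0 ≤ x) :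
    t * x ≤ σ * t ^ ρ + R' * x ^ Q := by
  have hρ0 : (0:ℝ) < ρ := lt_trans one_pos hρ
  have hQ0 : (0:ℝ) < Q := lt_trans one_pos hQ
  have hρσ : 0 < ρ * σ := mul_pos hρ0 hσ
  set s := (ρ * σ) ^ (1 / ρ) with hs_def
  have hs : 0 < s := Real.rpow_pos_of_pos hρσ _
  have hkey := key_const hρ0 hQ0 hσ hR' heq
  have hsQ : s ^ Q = (ρ * σ) ^ (Q / ρ) := by
    rw [hs_def, ← Real.rpow_mul hρσ.le]
    congr 1; ring
  have hsρ : s ^ ρ = ρ * σ := by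
    rw [hs_def, ← Real.rpow_mul hρσ.le, one_div, inv_mul_cancel₀ hρ0.ne', Real.rpow_one]
  have hconj' : ρ.HolderConjugate Q := Real.holderConjugate_iff.mpr ⟨hρ, by rw [← one_div, ← one_div]; linarith⟩
  have hyoung := Real.young_inequality_of_nonneg (mul_nonneg hs.le ht)
    (div_nonneg hx hs.le) hconj'
  have hab : s * t * (x / s) = t * x := by field_simp
  rw [hab] at hyoung
  refine hyoung.trans (le_of_eq ?_)
  have h1 : (s * t) ^ ρ / ρ = σ * t ^ ρ := by
    rw [Real.mul_rpow hs.le ht, hsρ]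
    field_simp
  have h2 : (x / s) ^ Q / Q = R' * x ^ Q := by
    rw [Real.div_rpow hx hs.le, hsQ]
    have hpos : (0:ℝ) < (ρ * σ) ^ (Q / ρ) := Real.rpow_pos_of_pos hρσ _
    field_simp
    linear_combination -(x ^ Q) * hkey
  rw [h1, h2]

lemma conj_Q_eq {ρ Q : ℝ} (hρ : 1 < ρ) (hQ : 1 < Q) (hconj : 1 / Q + 1 / ρ = 1) :
    Q = ρ / (ρ - 1) := by
  have hρ0 : (0:ℝ) < ρ := lt_trans one_pos hρ
  have hQ0 : (0:ℝ) < Q := lt_trans one_pos hQ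
  have h : ρ + Q = Q * ρ := by field_simp at hconj; linarith
  rw [eq_div_iff (by linarith : ρ - 1 ≠ 0)]
  nlinarith

lemma chernoff_exponent {ρ Q σ R' x : ℝ} (hρ : 1 < ρ) (hQ : 1 < Q)
    (hconj : 1 / Q + 1 / ρ = 1) (hσ : 0 < σ) (hR' : 0 < R')
    (heq : (ρ * σ) ^ (1 / ρ) * (Q * R') ^ (1 / Q) = 1) (hx : 0 < x) :
    σ * ((x / (ρ * σ)) ^ (1 / (ρ - 1))) ^ ρ - (x / (ρ * σ)) ^ (1 / (ρ - 1)) * x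
      = -(R' * x ^ Q) := by
  have hρ0 : (0:ℝ) < ρ := lt_trans one_pos hρ
  have hQ0 : (0:ℝ) < Q := lt_trans one_pos hQ
  have hd : (0:ℝ) < ρ - 1 := by linarith
  have hρσ : 0 < ρ * σ := mul_pos hρ0 hσ
  set u := x / (ρ * σ) with hu_def
  have hu : 0 < u := div_pos hx hρσ
  set t := u ^ (1 / (ρ - 1)) with ht_def
  have ht : 0 < t := Real.rpow_pos_of_pos hu _
  have hQval : Q = ρ / (ρ - 1) := conj_Q_eq hρ hQ hconj
  have hkey := key_const hρ0 hQ0 hσ hR' heq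
  -- t ^ ρ = t * u
  have htρ : t ^ ρ = t * u := by
    rw [ht_def, ← Real.rpow_mul hu.le,
      show 1 / (ρ - 1) * ρ = 1 / (ρ - 1) + 1 by field_simp; try ring,
      Real.rpow_add hu, Real.rpow_one]
  have hxQ : x ^ Q = x ^ (1 / (ρ - 1)) * x := by
    rw [hQval, show ρ / (ρ - 1) = 1 / (ρ - 1) + 1 by field_simp; try ring,
      Real.rpow_add hx, Real.rpow_one]
  have hvpos : (0:ℝ) < (ρ * σ) ^ (1 / (ρ - 1)) := Real.rpow_pos_of_pos hρσ _
  have htx : t * x = x ^ Q * ((ρ * σ) ^ (1 / (ρ - 1)))⁻¹ := by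
    rw [ht_def, hu_def, Real.div_rpow hx.le hρσ.le, hxQ]
    field_simp
  have hQρd : Q / ρ = 1 / (ρ - 1) := by
    rw [hQval]
    field_simp
    try ring
  have hR'eq : R' = ((ρ * σ) ^ (1 / (ρ - 1)))⁻¹ / Q := by
    rw [← hQρd]
    have hpos : (0:ℝ) < (ρ * σ) ^ (Q / ρ) := Real.rpow_pos_of_pos hρσ _
    field_simp
    linear_combination hkey
  have h5 : σ * (t * u) = t * x / ρ := by
    rw [hu_def]
    field_simp
  have hsum : ρ + Q = Q * ρ := by field_simp at hconj; linarith
  calc σ * t ^ ρ - t * x = t * x / ρ - t * x := by rw [htρ, h5]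
    _ = -(t * x / Q) := by
        field_simp
        linear_combination hsum
    _ = -(R' * x ^ Q) := by rw [htx, hR'eq]; ring

end helpers

lemma aux_mul_lintegral {Ω : Type*} {m0 : MeasurableSpace Ω} (μ : Measure Ω)
    [IsProbabilityMeasure μ] {G : MeasurableSpace Ω} (hG : G ≤ m0)
    {W Y : Ω → ℝ} (hW : StronglyMeasurable[G] W) (hW0 : ∀ ω, 0 ≤ W ω)
    (hY : Integrable Y μ) (hY0 : ∀ ω, 0 ≤ Y ω) {c : ℝ} (hc : 0 ≤ c)
    (hcond : ∀ᵐ ω ∂μ, (μ[Y|G]) ω ≤ c) :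
    ∫⁻ ω, ENNReal.ofReal (W ω * Y ω) ∂μ ≤ ENNReal.ofReal c * ∫⁻ ω, ENNReal.ofReal (W ω) ∂μ := by
  have hWsm : StronglyMeasurable[m0] W := hW.mono hG
  have key : ∀ m : ℕ, ∫⁻ ω, ENNReal.ofReal (min (W ω) m * Y ω) ∂μ
      ≤ ENNReal.ofReal c * ∫⁻ ω, ENNReal.ofReal (W ω) ∂μ := by
    intro m
    set Wm : Ω → ℝ := fun ω => min (W ω) m with hWm_def
    have hWmG : StronglyMeasurable[G] Wm := hW.inf stronglyMeasurable_const
    have hWm_sm : StronglyMeasurable[m0] Wm := hWmG.mono hG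
    have hWm0 : ∀ ω, 0 ≤ Wm ω := fun ω => le_min (hW0 ω) (by positivity)
    have hWm_bdd : ∀ ω, ‖Wm ω‖ ≤ m := fun ω => by
      rw [Real.norm_eq_abs, abs_of_nonneg (hWm0 ω)]; exact min_le_right _ _
    have hWm_int : Integrable Wm μ :=
      ⟨hWm_sm.aestronglyMeasurable (μ := μ), HasFiniteIntegral.of_bounded (ae_of_all _ hWm_bdd)⟩
    have hWmY_int : Integrable (Wm * Y) μ :=
      hY.bdd_mul hWm_sm.aestronglyMeasurable (c := m) (ae_of_all _ hWm_bdd)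
    have hpull : μ[Wm * Y|G] =ᵐ[μ] Wm * μ[Y|G] :=
      condExp_mul_of_stronglyMeasurable_left hWmG hWmY_int hY
    have h1 : ∫ ω, Wm ω * Y ω ∂μ = ∫ ω, Wm ω * (μ[Y|G]) ω ∂μ :=
      calc ∫ ω, Wm ω * Y ω ∂μ = ∫ ω, (μ[Wm * Y|G]) ω ∂μ :=
            (integral_condExp hG (f := Wm * Y)).symm
        _ = ∫ ω, Wm ω * (μ[Y|G]) ω ∂μ := integral_congr_ae hpull
    have h2 : ∫ ω, Wm ω * (μ[Y|G]) ω ∂μ ≤ ∫ ω, Wm ω * c ∂μ := by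
      refine integral_mono_ae ((integrable_condExp.congr hpull).congr ?_) (hWm_int.mul_const c) ?_
      · rfl
      · filter_upwards [hcond] with ω hω
        exact mul_le_mul_of_nonneg_left hω (hWm0 ω)
    have h3 : ∫ ω, Wm ω * c ∂μ = c * ∫ ω, Wm ω ∂μ := by
      rw [integral_mul_const]; ring
    have h4 : ∫⁻ ω, ENNReal.ofReal (Wm ω * Y ω) ∂μ = ENNReal.ofReal (∫ ω, Wm ω * Y ω ∂μ) :=
      (ofReal_integral_eq_lintegral_ofReal hWmY_int
        (ae_of_all _ fun ω => mul_nonneg (hWm0 ω) (hY0 ω))).symm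
    have h5 : ENNReal.ofReal (∫ ω, Wm ω ∂μ) = ∫⁻ ω, ENNReal.ofReal (Wm ω) ∂μ :=
      ofReal_integral_eq_lintegral_ofReal hWm_int (ae_of_all _ hWm0)
    calc ∫⁻ ω, ENNReal.ofReal (Wm ω * Y ω) ∂μ
        = ENNReal.ofReal (∫ ω, Wm ω * Y ω ∂μ) := h4
      _ ≤ ENNReal.ofReal (c * ∫ ω, Wm ω ∂μ) := by
          apply ENNReal.ofReal_le_ofReal; rw [h1, ← h3]; exact h2
      _ = ENNReal.ofReal c * ENNReal.ofReal (∫ ω, Wm ω ∂μ) := by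
          rw [ENNReal.ofReal_mul hc]
      _ = ENNReal.ofReal c * ∫⁻ ω, ENNReal.ofReal (Wm ω) ∂μ := by rw [h5]
      _ ≤ ENNReal.ofReal c * ∫⁻ ω, ENNReal.ofReal (W ω) ∂μ := by
          gcongr with ω
          exact min_le_left _ _
  have hmono : ∀ᵐ ω ∂μ, Monotone fun m : ℕ => ENNReal.ofReal (min (W ω) m * Y ω) := by
    refine ae_of_all _ fun ω i j hij => ?_
    exact ENNReal.ofReal_le_ofReal (mul_le_mul_of_nonneg_right
      (min_le_min le_rfl (by exact_mod_cast hij)) (hY0 ω))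
  have hmeas : ∀ m : ℕ, AEMeasurable (fun ω => ENNReal.ofReal (min (W ω) m * Y ω)) μ := by
    intro m
    exact (ENNReal.measurable_ofReal.comp_aemeasurable
      ((((hWsm.measurable.min measurable_const).aemeasurable (μ := μ)).mul
        hY.aestronglyMeasurable.aemeasurable)))
  have hlim : ∫⁻ ω, ENNReal.ofReal (W ω * Y ω) ∂μ
      = ⨆ m : ℕ, ∫⁻ ω, ENNReal.ofReal (min (W ω) m * Y ω) ∂μ := by
    rw [← lintegral_iSup' hmeas hmono]
    refine lintegral_congr fun ω => ?_
    refine (iSup_eq_of_tendsto ?_ ?_).symm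
    · intro i j hij
      exact ENNReal.ofReal_le_ofReal (mul_le_mul_of_nonneg_right
        (min_le_min le_rfl (by exact_mod_cast hij)) (hY0 ω))
    · have : ∀ m : ℕ, ⌈W ω⌉₊ ≤ m → ENNReal.ofReal (min (W ω) m * Y ω)
          = ENNReal.ofReal (W ω * Y ω) := by
        intro m hm
        congr 2
        rw [min_eq_left]
        exact (Nat.le_ceil (W ω)).trans (by exact_mod_cast hm)
      exact tendsto_atTop_of_eventually_const this
  rw [hlim]
  exact iSup_le key


/-- Theorem 3.1: for an adapted sequence with `E[exp (R |X_i|^Q) | F_{i-1}] ≤ K` (`Q > 1`),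
the Laplace transform of `|S_n|` grows at most like `exp (n τ₁ t^ρ)` for `t ≥ t₁`, and
`P[|S_n|/n > x] ≤ exp (-n R₁ x^Q)` for `x ≥ x₁ := ρ τ₁ t₁^(ρ-1)`, where `t₁` depends only
on `K, Q, R, τ₁` and `R₁` is determined by `(ρτ₁)^(1/ρ) (Q R₁)^(1/Q) = 1`. -/
theorem adapted_large_deviation_order_Q
    (Q R K ρ τ τ₁ : ℝ) (hQ : 1 < Q) (hR : 0 < R) (hK : 0 < K)
    (hρ : 1 < ρ) (hτ : 0 < τ)
    (hconj : 1 / Q + 1 / ρ = 1)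
    (hτeq : (ρ * τ) ^ (1 / ρ) * (Q * R) ^ (1 / Q) = 1)
    (hτ₁ : τ < τ₁) :
    ∃ t₁ : ℝ, 0 < t₁ ∧
      ∀ {Ω : Type*} {m0 : MeasurableSpace Ω} (μ : Measure Ω), IsProbabilityMeasure μ →
      ∀ (ℱ : Filtration ℕ m0) (n : ℕ) (X : ℕ → Ω → ℝ), 1 ≤ n →
        (∀ i ∈ Finset.Icc 1 n, StronglyMeasurable[ℱ i] (X i)) →
        (∀ i ∈ Finset.Icc 1 n,
          Integrable (fun ω => Real.exp (R * |X i ω| ^ Q)) μ) →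
        (∀ i ∈ Finset.Icc 1 n,
          ∀ᵐ ω ∂μ, (μ[fun ω' => Real.exp (R * |X i ω'| ^ Q)|ℱ (i - 1)]) ω ≤ K) →
        (∀ t : ℝ, t₁ ≤ t →
          (∫⁻ ω, ENNReal.ofReal (Real.exp (t * |∑ i ∈ Finset.Icc 1 n, X i ω|)) ∂μ) ≤
            ENNReal.ofReal (Real.exp (n * τ₁ * t ^ ρ))) ∧
        (∀ R₁ : ℝ, 0 < R₁ → (ρ * τ₁) ^ (1 / ρ) * (Q * R₁) ^ (1 / Q) = 1 →
          ∀ x : ℝ, ρ * τ₁ * t₁ ^ (ρ - 1) ≤ x →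
            μ {ω | |∑ i ∈ Finset.Icc 1 n, X i ω| / n > x} ≤
              ENNReal.ofReal (Real.exp (-(n * R₁ * x ^ Q)))) := by
  
  have hQ0 : (0:ℝ) < Q := lt_trans one_pos hQ
  have hρ0 : (0:ℝ) < ρ := lt_trans one_pos hρ
  have hd : (0:ℝ) < ρ - 1 := by linarith
  have hττ₁ : (0:ℝ) < τ₁ - τ := by linarith
  set L : ℝ := max (Real.log K) 0 with hL_def
  set t₁ : ℝ := max 1 ((L / (τ₁ - τ)) ^ (1 / ρ)) with ht₁_def
  have ht₁pos : (0:ℝ) < t₁ := lt_of_lt_of_le one_pos (le_max_left _ _)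
  have ht₁pow : L / (τ₁ - τ) ≤ t₁ ^ ρ := by
    have h1 : ((L / (τ₁ - τ)) ^ (1 / ρ)) ^ ρ = L / (τ₁ - τ) := by
      rw [← Real.rpow_mul (by positivity), one_div, inv_mul_cancel₀ hρ0.ne', Real.rpow_one]
    calc L / (τ₁ - τ) = ((L / (τ₁ - τ)) ^ (1 / ρ)) ^ ρ := h1.symm
      _ ≤ t₁ ^ ρ := Real.rpow_le_rpow (Real.rpow_nonneg (by positivity) _)
          (le_max_right _ _) hρ0.le
  refine ⟨t₁, ht₁pos, ?_⟩
  intro Ω m0 μ hμ ℱ n X hn hXmeas hXint hXcond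
  have partA : ∀ t : ℝ, t₁ ≤ t →
      (∫⁻ ω, ENNReal.ofReal (Real.exp (t * |∑ i ∈ Finset.Icc 1 n, X i ω|)) ∂μ) ≤
        ENNReal.ofReal (Real.exp (n * τ₁ * t ^ ρ)) := by
    intro t ht
    have ht0 : (0:ℝ) < t := lt_of_lt_of_le ht₁pos ht
    set c : ℝ := K * Real.exp (τ * t ^ ρ) with hc_def
    have hc0 : 0 < c := mul_pos hK (Real.exp_pos _)
    have main : ∀ k, k ≤ n →
        ∫⁻ ω, ENNReal.ofReal (∏ i ∈ Finset.Icc 1 k, Real.exp (t * |X i ω|)) ∂μ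
          ≤ ENNReal.ofReal c ^ k := by
      intro k
      induction k with
      | zero =>
        intro _
        rw [Finset.Icc_eq_empty (by omega)]
        simp
      | succ k ih =>
        intro hk1
        have hk : k ≤ n := Nat.le_of_succ_le hk1
        have hmem : k + 1 ∈ Finset.Icc 1 n :=
          Finset.mem_Icc.mpr ⟨Nat.succ_le_succ (Nat.zero_le k), hk1⟩
        set Y : Ω → ℝ := fun ω => Real.exp (t * |X (k+1) ω|) with hY_def
        set W : Ω → ℝ := fun ω => ∏ i ∈ Finset.Icc 1 k, Real.exp (t * |X i ω|) with hW_def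
        have hXsm : StronglyMeasurable[ℱ (k+1)] (X (k+1)) := hXmeas (k+1) hmem
        have hW_meas : StronglyMeasurable[ℱ k] W := by
          refine Finset.stronglyMeasurable_fun_prod _ fun i hi => ?_
          have hik : i ≤ k := (Finset.mem_Icc.mp hi).2
          have hin : i ∈ Finset.Icc 1 n :=
            Finset.mem_Icc.mpr ⟨(Finset.mem_Icc.mp hi).1, hik.trans hk⟩
          have hXi : StronglyMeasurable[ℱ k] (X i) := (hXmeas i hin).mono (ℱ.mono hik)
          exact (Real.continuous_exp.comp
            (continuous_const.mul continuous_abs)).comp_stronglyMeasurable hXi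
        have hW0 : ∀ ω, 0 ≤ W ω := fun ω => Finset.prod_nonneg fun i _ => (Real.exp_pos _).le
        have hY0 : ∀ ω, 0 ≤ Y ω := fun ω => (Real.exp_pos _).le
        have hYle : ∀ ω, Y ω ≤ Real.exp (τ * t ^ ρ) * Real.exp (R * |X (k+1) ω| ^ Q) := by
          intro ω
          rw [← Real.exp_add]
          exact Real.exp_le_exp.mpr
            (young_bound hρ hQ hconj hτ hR hτeq ht0.le (abs_nonneg _))
        have hg_int : Integrable
            (fun ω => Real.exp (τ * t ^ ρ) * Real.exp (R * |X (k+1) ω| ^ Q)) μ :=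
          (hXint (k+1) hmem).const_mul _
        have hY_meas : AEStronglyMeasurable Y μ := by
          have hXm0 : StronglyMeasurable[m0] (X (k+1)) := hXsm.mono (ℱ.le (k+1))
          exact ((Real.continuous_exp.comp
            (continuous_const.mul continuous_abs)).comp_stronglyMeasurable
              hXm0).aestronglyMeasurable
        have hY_int : Integrable Y μ := by
          refine hg_int.mono' hY_meas (ae_of_all _ fun ω => ?_)
          rw [Real.norm_eq_abs, abs_of_pos (Real.exp_pos _)]
          exact hYle ω
        have hcond : ∀ᵐ ω ∂μ, (μ[Y|ℱ k]) ω ≤ c := by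
          have h1 : μ[Y|ℱ k] ≤ᵐ[μ]
              μ[fun ω => Real.exp (τ * t ^ ρ) * Real.exp (R * |X (k+1) ω| ^ Q)|ℱ k] :=
            condExp_mono hY_int hg_int (ae_of_all _ hYle)
          have h2 : μ[fun ω => Real.exp (τ * t ^ ρ) * Real.exp (R * |X (k+1) ω| ^ Q)|ℱ k]
              =ᵐ[μ] fun ω => Real.exp (τ * t ^ ρ) *
                (μ[fun ω' => Real.exp (R * |X (k+1) ω'| ^ Q)|ℱ k]) ω := by
            have h2' := condExp_smul (μ := μ) (m := ℱ k) (Real.exp (τ * t ^ ρ))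
              (fun ω => Real.exp (R * |X (k+1) ω| ^ Q))
            filter_upwards [h2'] with ω hω
            simpa [smul_eq_mul, Pi.smul_def] using hω
          have h3 := hXcond (k+1) hmem
          filter_upwards [h1, h2, h3] with ω hω1 hω2 hω3
          calc (μ[Y|ℱ k]) ω
              ≤ (μ[fun ω => Real.exp (τ * t ^ ρ) * Real.exp (R * |X (k+1) ω| ^ Q)|ℱ k]) ω := hω1
            _ = Real.exp (τ * t ^ ρ) *
                (μ[fun ω' => Real.exp (R * |X (k+1) ω'| ^ Q)|ℱ k]) ω := hω2
            _ ≤ Real.exp (τ * t ^ ρ) * K := by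
                refine mul_le_mul_of_nonneg_left ?_ (Real.exp_pos _).le
                simpa using hω3
            _ = c := by rw [hc_def]; ring
        have hstep := aux_mul_lintegral μ (ℱ.le k) hW_meas hW0 hY_int hY0 hc0.le hcond
        have hprod : ∀ ω, (∏ i ∈ Finset.Icc 1 (k+1), Real.exp (t * |X i ω|)) = W ω * Y ω :=
          fun ω => Finset.prod_Icc_succ_top (Nat.succ_le_succ (Nat.zero_le k)) _
        calc ∫⁻ ω, ENNReal.ofReal (∏ i ∈ Finset.Icc 1 (k+1), Real.exp (t * |X i ω|)) ∂μ
            = ∫⁻ ω, ENNReal.ofReal (W ω * Y ω) ∂μ :=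
              lintegral_congr fun ω => by rw [hprod ω]
          _ ≤ ENNReal.ofReal c * ∫⁻ ω, ENNReal.ofReal (W ω) ∂μ := hstep
          _ ≤ ENNReal.ofReal c * ENNReal.ofReal c ^ k := by
              gcongr
              exact ih hk
          _ = ENNReal.ofReal c ^ (k+1) := (pow_succ' _ _).symm
    have hpt : ∀ ω, Real.exp (t * |∑ i ∈ Finset.Icc 1 n, X i ω|)
        ≤ ∏ i ∈ Finset.Icc 1 n, Real.exp (t * |X i ω|) := by
      intro ω
      rw [← Real.exp_sum]
      apply Real.exp_le_exp.mpr
      rw [← Finset.mul_sum]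
      exact mul_le_mul_of_nonneg_left (Finset.abs_sum_le_sum_abs _ _) ht0.le
    have hfinal : ENNReal.ofReal c ^ n ≤ ENNReal.ofReal (Real.exp (n * τ₁ * t ^ ρ)) := by
      rw [← ENNReal.ofReal_pow hc0.le]
      apply ENNReal.ofReal_le_ofReal
      have hc_exp : c = Real.exp (Real.log K + τ * t ^ ρ) := by
        rw [Real.exp_add, Real.exp_log hK]
      rw [hc_exp, ← Real.exp_nat_mul]
      apply Real.exp_le_exp.mpr
      have htρ : L / (τ₁ - τ) ≤ t ^ ρ :=
        ht₁pow.trans (Real.rpow_le_rpow ht₁pos.le ht hρ0.le)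
      have hlog : Real.log K + τ * t ^ ρ ≤ τ₁ * t ^ ρ := by
        have hLK : Real.log K ≤ L := le_max_left _ _
        have := (div_le_iff₀ hττ₁).mp htρ
        nlinarith
      calc (n:ℝ) * (Real.log K + τ * t ^ ρ) ≤ (n:ℝ) * (τ₁ * t ^ ρ) :=
            mul_le_mul_of_nonneg_left hlog (Nat.cast_nonneg n)
        _ = (n:ℝ) * τ₁ * t ^ ρ := by ring
    calc ∫⁻ ω, ENNReal.ofReal (Real.exp (t * |∑ i ∈ Finset.Icc 1 n, X i ω|)) ∂μ
        ≤ ∫⁻ ω, ENNReal.ofReal (∏ i ∈ Finset.Icc 1 n, Real.exp (t * |X i ω|)) ∂μ :=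
          lintegral_mono fun ω => ENNReal.ofReal_le_ofReal (hpt ω)
      _ ≤ ENNReal.ofReal c ^ n := main n le_rfl
      _ ≤ ENNReal.ofReal (Real.exp (n * τ₁ * t ^ ρ)) := hfinal
  refine ⟨partA, ?_⟩
  intro R₁ hR₁ hReq x hx
  set S : Ω → ℝ := fun ω => ∑ i ∈ Finset.Icc 1 n, X i ω with hS_def
  have hτ₁0 : (0:ℝ) < τ₁ := lt_trans hτ hτ₁
  have hρτ₁ : (0:ℝ) < ρ * τ₁ := mul_pos hρ0 hτ₁0
  have hx0 : (0:ℝ) < x := lt_of_lt_of_le (by positivity) hx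
  set t : ℝ := (x / (ρ * τ₁)) ^ (1 / (ρ - 1)) with ht_def
  have htt₁ : t₁ ≤ t := by
    have h1 : t₁ ^ (ρ - 1) ≤ x / (ρ * τ₁) := by
      rw [le_div_iff₀ hρτ₁]
      calc t₁ ^ (ρ - 1) * (ρ * τ₁) = ρ * τ₁ * t₁ ^ (ρ - 1) := by ring
        _ ≤ x := hx
    have h2 : (t₁ ^ (ρ - 1)) ^ (1 / (ρ - 1)) ≤ t :=
      Real.rpow_le_rpow (by positivity) h1 (by positivity)
    rwa [← Real.rpow_mul ht₁pos.le, mul_one_div, div_self hd.ne', Real.rpow_one] at h2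
  have ht0 : (0:ℝ) < t := lt_of_lt_of_le ht₁pos htt₁
  have hlap := partA t htt₁
  have hn0 : (0:ℝ) < n := by exact_mod_cast hn
  have hSmeas : Measurable S := by
    apply Finset.measurable_sum
    intro i hi
    exact ((hXmeas i hi).mono (ℱ.le i)).measurable
  have hf_meas : AEMeasurable (fun ω => ENNReal.ofReal (Real.exp (t * |S ω|))) μ :=
    (ENNReal.measurable_ofReal.comp
      (Real.measurable_exp.comp (measurable_const.mul hSmeas.abs))).aemeasurable
  set ε : ℝ≥0∞ := ENNReal.ofReal (Real.exp (t * (n * x))) with hε_def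
  have hsub : {ω | |S ω| / n > x} ⊆ {ω | ε ≤ ENNReal.ofReal (Real.exp (t * |S ω|))} := by
    intro ω hω
    simp only [Set.mem_setOf_eq] at hω ⊢
    apply ENNReal.ofReal_le_ofReal
    apply Real.exp_le_exp.mpr
    have hrel : (n:ℝ) * x ≤ |S ω| := by
      rw [gt_iff_lt, lt_div_iff₀ hn0] at hω
      linarith
    exact mul_le_mul_of_nonneg_left hrel ht0.le
  have hcher : ε * μ {ω | |S ω| / n > x} ≤ ENNReal.ofReal (Real.exp (n * τ₁ * t ^ ρ)) := by
    calc ε * μ {ω | |S ω| / n > x}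
        ≤ ε * μ {ω | ε ≤ ENNReal.ofReal (Real.exp (t * |S ω|))} :=
          mul_le_mul_right (measure_mono hsub) ε
      _ ≤ ∫⁻ ω, ENNReal.ofReal (Real.exp (t * |S ω|)) ∂μ := mul_meas_ge_le_lintegral₀ hf_meas ε
      _ ≤ ENNReal.ofReal (Real.exp (n * τ₁ * t ^ ρ)) := hlap
  have hε0 : ε ≠ 0 := by
    rw [hε_def]
    simp [Real.exp_pos]
  have hεtop : ε ≠ ⊤ := ENNReal.ofReal_ne_top
  have hdiv : μ {ω | |S ω| / n > x} ≤ ENNReal.ofReal (Real.exp (n * τ₁ * t ^ ρ)) / ε := by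
    rw [ENNReal.le_div_iff_mul_le (Or.inl hε0) (Or.inl hεtop), mul_comm]
    exact hcher
  refine hdiv.trans (le_of_eq ?_)
  rw [hε_def, ← ENNReal.ofReal_div_of_pos (Real.exp_pos _), ← Real.exp_sub]
  congr 1
  congr 1
  have hch := chernoff_exponent hρ hQ hconj hτ₁0 hR₁ hReq hx0
  calc (n:ℝ) * τ₁ * t ^ ρ - t * ((n:ℝ) * x)
      = (n:ℝ) * (τ₁ * t ^ ρ - t * x) := by ring
    _ = (n:ℝ) * (-(R₁ * x ^ Q)) := by rw [ht_def, hch]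
    _ = -((n:ℝ) * R₁ * x ^ Q) := by ring
end

section
/- Let (X_i)_{1≤i≤n} be independent and identically distributed real random variables with S_n = X_1 + ⋯ + X_n. If P[|S_n|/n > x] ≤ exp(−n R_1 x^Q) holds for some n ≥ 1, R_1 > 0, Q > 1 and all x ≥ x_1 > 0, then for all R ∈ (0, R_1), E[exp(R|X_1|^Q)] ≤ 2K, where K = exp(R x_1^Q) + (R/(R_1 − R)) exp(−(R_1 − R) x_1^Q). -/
open MeasureTheory ProbabilityTheory Filter

/-- Converse part of Theorem 3.1: if i.i.d. partial sums satisfy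
`P[|S_n|/n > x] ≤ exp (-n R₁ x^Q)` for all `x ≥ x₁`, then `X 1` has an explicit
exponential moment of order `Q` for every `R < R₁`. -/
theorem iid_exponential_moment_order_Q_of_deviation_bound
    {Ω : Type*} {m0 : MeasurableSpace Ω} (μ : Measure Ω) [IsProbabilityMeasure μ]
    (n : ℕ) (hn : 1 ≤ n) (X : ℕ → Ω → ℝ) (R₁ Q x₁ : ℝ)
    (hR₁ : 0 < R₁) (hQ : 1 < Q) (hx₁ : 0 < x₁)
    (hmeas : ∀ i, Measurable (X i))
    (hindep : iIndepFun
      (fun i : {i : ℕ // i ∈ Finset.Icc 1 n} => X i) μ)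
    (hident : ∀ i ∈ Finset.Icc 1 n, IdentDistrib (X i) (X 1) μ μ)
    (hdev : ∀ x : ℝ, x₁ ≤ x →
      μ {ω | |∑ k ∈ Finset.Icc 1 n, X k ω| / n > x} ≤
        ENNReal.ofReal (Real.exp (-(n * R₁ * x ^ Q)))) :
    ∀ R : ℝ, 0 < R → R < R₁ →
      (∫⁻ ω, ENNReal.ofReal (Real.exp (R * |X 1 ω| ^ Q)) ∂μ) ≤
        ENNReal.ofReal (2 * (Real.exp (R * x₁ ^ Q) +
          R / (R₁ - R) * Real.exp (-((R₁ - R) * x₁ ^ Q)))) := by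
  intro R hR hRR₁
  have hn0 : (0:ℝ) < n := by exact_mod_cast Nat.lt_of_lt_of_le Nat.zero_lt_one hn
  have hQ0 : (0:ℝ) < Q := lt_trans one_pos hQ
  have hcard : (Finset.Icc 1 n).card = n := by
    rw [Nat.card_Icc]; omega
  -- one-sided tail bound machinery
  have key : ∀ x : ℝ, x₁ ≤ x → ∀ s : Set ℝ, MeasurableSet s →
      (∀ ω, (∀ i ∈ Finset.Icc 1 n, X i ω ∈ s) →
        |∑ k ∈ Finset.Icc 1 n, X k ω| / n > x) →
      μ (X 1 ⁻¹' s) ≤ ENNReal.ofReal (Real.exp (-(R₁ * x ^ Q))) := by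
    intro x hx s hs hsub
    have hsubset : (⋂ i : {i : ℕ // i ∈ Finset.Icc 1 n}, X i ⁻¹' s) ⊆
        {ω | |∑ k ∈ Finset.Icc 1 n, X k ω| / n > x} := by
      intro ω hω
      exact hsub ω (fun i hi => Set.mem_iInter.1 hω ⟨i, hi⟩)
    have hprod : μ (⋂ i : {i : ℕ // i ∈ Finset.Icc 1 n}, X i ⁻¹' s)
        = (μ (X 1 ⁻¹' s)) ^ n := by
      rw [hindep.meas_iInter (fun i => ⟨s, hs, rfl⟩)]
      have heq : ∀ i : {i : ℕ // i ∈ Finset.Icc 1 n}, μ (X i ⁻¹' s) = μ (X 1 ⁻¹' s) :=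
        fun i => (hident i i.2).measure_mem_eq hs
      rw [Finset.prod_congr rfl (fun i _ => heq i), Finset.prod_const]
      congr 1
      rw [Finset.card_univ, Fintype.card_coe, hcard]
    have hpw : μ (X 1 ⁻¹' s) ^ n ≤
        (ENNReal.ofReal (Real.exp (-(R₁ * x ^ Q)))) ^ n := by
      rw [← hprod]
      refine (measure_mono hsubset).trans ((hdev x hx).trans_eq ?_)
      rw [← ENNReal.ofReal_pow (Real.exp_nonneg _), ← Real.exp_nat_mul]
      ring_nf
    by_contra hcon
    push_neg at hcon
    exact absurd hpw (not_le.2 (ENNReal.pow_lt_pow_left (by omega) hcon))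
  -- two-sided tail bound for |X 1|
  have tail : ∀ x : ℝ, x₁ ≤ x →
      μ {ω | x < |X 1 ω|} ≤ 2 * ENNReal.ofReal (Real.exp (-(R₁ * x ^ Q))) := by
    intro x hx
    have hxpos : 0 < x := lt_of_lt_of_le hx₁ hx
    have hne : (Finset.Icc 1 n).Nonempty := ⟨1, by simp [hn]⟩
    have h1 : μ (X 1 ⁻¹' Set.Ioi x) ≤ ENNReal.ofReal (Real.exp (-(R₁ * x ^ Q))) := by
      refine key x hx _ measurableSet_Ioi ?_
      intro ω hω
      have hsum : (n : ℝ) * x < ∑ k ∈ Finset.Icc 1 n, X k ω := by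
        calc (n : ℝ) * x = ∑ _k ∈ Finset.Icc 1 n, x := by
              rw [Finset.sum_const, hcard, nsmul_eq_mul]
        _ < ∑ k ∈ Finset.Icc 1 n, X k ω :=
              Finset.sum_lt_sum_of_nonempty hne (fun i hi => hω i hi)
      have : (n : ℝ) * x < |∑ k ∈ Finset.Icc 1 n, X k ω| :=
        hsum.trans_le (le_abs_self _)
      exact (lt_div_iff₀ hn0).2 (by linarith [this])
    have h2 : μ (X 1 ⁻¹' Set.Iio (-x)) ≤ ENNReal.ofReal (Real.exp (-(R₁ * x ^ Q))) := by
      refine key x hx _ measurableSet_Iio ?_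
      intro ω hω
      have hsum : ∑ k ∈ Finset.Icc 1 n, X k ω < (n : ℝ) * (-x) := by
        calc ∑ k ∈ Finset.Icc 1 n, X k ω
            < ∑ _k ∈ Finset.Icc 1 n, (-x) :=
              Finset.sum_lt_sum_of_nonempty hne (fun i hi => hω i hi)
        _ = (n : ℝ) * (-x) := by rw [Finset.sum_const, hcard, nsmul_eq_mul]
      have : (n : ℝ) * x < |∑ k ∈ Finset.Icc 1 n, X k ω| := by
        have := neg_lt_neg hsum
        calc (n : ℝ) * x = -((n:ℝ) * (-x)) := by ring
        _ < -∑ k ∈ Finset.Icc 1 n, X k ω := this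
        _ ≤ |∑ k ∈ Finset.Icc 1 n, X k ω| := neg_le_abs _
      exact (lt_div_iff₀ hn0).2 (by linarith [this])
    have hsub : {ω | x < |X 1 ω|} ⊆ X 1 ⁻¹' Set.Ioi x ∪ X 1 ⁻¹' Set.Iio (-x) := by
      intro ω hω
      have hω' : x < |X 1 ω| := hω
      rcases lt_abs.1 hω' with h | h
      · exact Or.inl h
      · exact Or.inr (by simpa using lt_neg.1 h)
    calc μ {ω | x < |X 1 ω|}
        ≤ μ (X 1 ⁻¹' Set.Ioi x) + μ (X 1 ⁻¹' Set.Iio (-x)) :=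
          (measure_mono hsub).trans (measure_union_le _ _)
    _ ≤ 2 * ENNReal.ofReal (Real.exp (-(R₁ * x ^ Q))) := by
          rw [two_mul]; exact add_le_add h1 h2
  -- layer cake
  set p := R₁ / R with hp
  have hp1 : 1 < p := (one_lt_div hR).2 hRR₁
  set T := Real.exp (R * x₁ ^ Q) with hT
  have hx₁Q : (0:ℝ) < x₁ ^ Q := Real.rpow_pos_of_pos hx₁ Q
  have hT1 : 1 ≤ T := Real.one_le_exp (by positivity)
  have hT0 : 0 < T := lt_of_lt_of_le one_pos hT1
  have f_mble : Measurable fun ω => Real.exp (R * |X 1 ω| ^ Q) := by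
    have := hmeas 1; fun_prop
  rw [lintegral_eq_lintegral_meas_lt μ
    (Filter.Eventually.of_forall (fun ω => (Real.exp_pos _).le)) f_mble.aemeasurable]
  have hsplit : Set.Ioi (0:ℝ) = Set.Ioc 0 T ∪ Set.Ioi T :=
    (Set.Ioc_union_Ioi_eq_Ioi hT0.le).symm
  rw [hsplit, lintegral_union measurableSet_Ioi Set.Ioc_disjoint_Ioi_same]
  have part1 : (∫⁻ t in Set.Ioc (0:ℝ) T, μ {ω | t < Real.exp (R * |X 1 ω| ^ Q)})
      ≤ ENNReal.ofReal T := by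
    calc (∫⁻ t in Set.Ioc (0:ℝ) T, μ {ω | t < Real.exp (R * |X 1 ω| ^ Q)})
        ≤ ∫⁻ _t in Set.Ioc (0:ℝ) T, 1 := lintegral_mono (fun t => prob_le_one)
    _ = volume (Set.Ioc (0:ℝ) T) := setLIntegral_one _
    _ = ENNReal.ofReal T := by rw [Real.volume_Ioc, sub_zero]
  have hpbound : ∀ t ∈ Set.Ioi T, μ {ω | t < Real.exp (R * |X 1 ω| ^ Q)} ≤
      2 * ENNReal.ofReal (t ^ (-p)) := by
    intro t ht
    have htT : T < t := ht
    have ht0 : (0:ℝ) < t := lt_trans hT0 htT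
    have hlogt : R * x₁ ^ Q < Real.log t := by
      have := Real.log_lt_log hT0 htT
      rwa [hT, Real.log_exp] at this
    have hlogt0 : 0 < Real.log t := lt_trans (by positivity) hlogt
    have hlr0 : 0 ≤ Real.log t / R := (div_pos hlogt0 hR).le
    set y := (Real.log t / R) ^ (1/Q) with hy
    have hyQ : y ^ Q = Real.log t / R := by
      rw [hy, ← Real.rpow_mul hlr0, one_div_mul_cancel hQ0.ne', Real.rpow_one]
    have hx₁y : x₁ ≤ y := by
      have h1 : x₁ ^ Q ≤ Real.log t / R := by
        rw [le_div_iff₀ hR]; nlinarith [hlogt]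
      have h2 : (x₁ ^ Q) ^ (1/Q) ≤ y :=
        Real.rpow_le_rpow (le_of_lt hx₁Q) h1 (by positivity)
      rwa [← Real.rpow_mul hx₁.le, mul_one_div_cancel hQ0.ne', Real.rpow_one] at h2
    have hincl : {ω | t < Real.exp (R * |X 1 ω| ^ Q)} ⊆ {ω | y < |X 1 ω|} := by
      intro ω hω
      have h1 : Real.log t < R * |X 1 ω| ^ Q := by
        have := Real.log_lt_log ht0 hω
        rwa [Real.log_exp] at this
      have h2 : Real.log t / R < |X 1 ω| ^ Q := (div_lt_iff₀ hR).2 (by linarith)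
      have h3 : y < (|X 1 ω| ^ Q) ^ (1/Q) :=
        Real.rpow_lt_rpow hlr0 h2 (by positivity)
      rwa [← Real.rpow_mul (abs_nonneg _), mul_one_div_cancel hQ0.ne',
        Real.rpow_one] at h3
    have harg : -(R₁ * (Real.log t / R)) = Real.log t * (-p) := by
      rw [hp]; ring
    have hval : Real.exp (-(R₁ * y ^ Q)) = t ^ (-p) := by
      rw [hyQ, harg, Real.rpow_def_of_pos ht0]
    calc μ {ω | t < Real.exp (R * |X 1 ω| ^ Q)}
        ≤ μ {ω | y < |X 1 ω|} := measure_mono hincl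
    _ ≤ 2 * ENNReal.ofReal (Real.exp (-(R₁ * y ^ Q))) := tail y hx₁y
    _ = 2 * ENNReal.ofReal (t ^ (-p)) := by rw [hval]
  have hnn : ∀ᵐ t ∂(volume.restrict (Set.Ioi T)), 0 ≤ t ^ (-p) := by
    refine (ae_restrict_iff' measurableSet_Ioi).2 (Filter.Eventually.of_forall ?_)
    intro t ht
    exact Real.rpow_nonneg (le_of_lt (lt_trans hT0 ht)) _
  have hint : IntegrableOn (fun t : ℝ => t ^ (-p)) (Set.Ioi T) :=
    integrableOn_Ioi_rpow_of_lt (by linarith) hT0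
  have part2 : (∫⁻ t in Set.Ioi T, μ {ω | t < Real.exp (R * |X 1 ω| ^ Q)})
      ≤ 2 * ENNReal.ofReal (R / (R₁ - R) * Real.exp (-((R₁ - R) * x₁ ^ Q))) := by
    calc (∫⁻ t in Set.Ioi T, μ {ω | t < Real.exp (R * |X 1 ω| ^ Q)})
        ≤ ∫⁻ t in Set.Ioi T, 2 * ENNReal.ofReal (t ^ (-p)) := by
          refine setLIntegral_mono ?_ hpbound
          have : Measurable fun t : ℝ => t ^ (-p) := by fun_prop
          fun_prop
    _ = 2 * ∫⁻ t in Set.Ioi T, ENNReal.ofReal (t ^ (-p)) := by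
          rw [lintegral_const_mul' _ _ (by norm_num)]
    _ = 2 * ENNReal.ofReal (∫ t in Set.Ioi T, t ^ (-p)) := by
          rw [ofReal_integral_eq_lintegral_ofReal hint hnn]
    _ = 2 * ENNReal.ofReal (R / (R₁ - R) * Real.exp (-((R₁ - R) * x₁ ^ Q))) := by
          congr 1
          rw [integral_Ioi_rpow_of_lt (by linarith) hT0]
          have h1 : R * x₁ ^ Q * (-p + 1) = -((R₁ - R) * x₁ ^ Q) := by
            field_simp [hp]; linarith [show R * p = R₁ by rw [hp]; field_simp]
          have hTp : T ^ (-p + 1) = Real.exp (-((R₁ - R) * x₁ ^ Q)) := by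
            rw [hT, ← Real.exp_mul, h1]
          have h3 : -p + 1 = -((R₁ - R) / R) := by
            have hd : (R₁ - R) / R = R₁ / R - 1 := by
              rw [sub_div, div_self hR.ne']
            rw [hd, hp]; ring
          rw [hTp, h3, neg_div_neg_eq, div_div_eq_mul_div]
          ring
  calc (∫⁻ t in Set.Ioc (0:ℝ) T, μ {ω | t < Real.exp (R * |X 1 ω| ^ Q)})
        + ∫⁻ t in Set.Ioi T, μ {ω | t < Real.exp (R * |X 1 ω| ^ Q)}
      ≤ ENNReal.ofReal T
        + 2 * ENNReal.ofReal (R / (R₁ - R) * Real.exp (-((R₁ - R) * x₁ ^ Q))) :=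
        add_le_add part1 part2
  _ ≤ ENNReal.ofReal (2 * (Real.exp (R * x₁ ^ Q) +
        R / (R₁ - R) * Real.exp (-((R₁ - R) * x₁ ^ Q)))) := by
      have h2 : (2 : ENNReal) = ENNReal.ofReal 2 := by norm_num
      rw [h2, ← ENNReal.ofReal_mul (by norm_num), ← ENNReal.ofReal_add
        (le_of_lt hT0) (mul_nonneg (by norm_num) (mul_nonneg
          (div_nonneg hR.le (by linarith)) (Real.exp_nonneg _)))]
      apply ENNReal.ofReal_le_ofReal
      rw [hT]
      nlinarith [Real.exp_pos (R * x₁ ^ Q),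
        mul_pos (div_pos hR (by linarith : (0:ℝ) < R₁ - R))
          (Real.exp_pos (-((R₁ - R) * x₁ ^ Q)))]
end

section
/- Let X be a positive real random variable, and let Q, ρ, τ, R ∈ (0, ∞) with 1 < Q < ∞, 1/Q + 1/ρ = 1 and (ρτ)^{1/ρ}(QR)^{1/Q} = 1, and let K > 0. Then: (i) if E[exp(tX)] ≤ K exp(τ t^ρ) for all t > 0, then P[X > x] ≤ K exp(−R x^Q) for all x > 0; and (ii) if P[X > x] ≤ K exp(−R x^Q) for all x > 0, then with a = K (2/R)^{1/(Q−1)}, one has E[exp(tX)] ≤ 1 + K + a t^ρ exp(τ t^ρ) for all t > 0. -/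
open MeasureTheory ProbabilityTheory Filter Set

set_option maxHeartbeats 1000000 in
/-- Lemma 3.3: relations between the growth of the Laplace transform `E[exp (t X)]`
and the decay of the tail `P[X > x]` for a nonnegative random variable, where
`1/Q + 1/ρ = 1` and `(ρτ)^(1/ρ) (QR)^(1/Q) = 1`. -/
theorem laplace_tail_duality
    {Ω : Type*} {m0 : MeasurableSpace Ω} (μ : Measure Ω) [IsProbabilityMeasure μ]
    (X : Ω → ℝ) (hXmeas : Measurable X) (hXpos : ∀ ω, 0 ≤ X ω)
    (Q ρ τ R K : ℝ) (hQ : 1 < Q) (hρ : 0 < ρ) (hτ : 0 < τ) (hR : 0 < R) (hK : 0 < K)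
    (hconj : 1 / Q + 1 / ρ = 1)
    (heq : (ρ * τ) ^ (1 / ρ) * (Q * R) ^ (1 / Q) = 1) :
    ((∀ t : ℝ, 0 < t →
        (∫⁻ ω, ENNReal.ofReal (Real.exp (t * X ω)) ∂μ) ≤
          ENNReal.ofReal (K * Real.exp (τ * t ^ ρ))) →
      ∀ x : ℝ, 0 < x →
        μ {ω | X ω > x} ≤ ENNReal.ofReal (K * Real.exp (-(R * x ^ Q)))) ∧
    ((∀ x : ℝ, 0 < x →
        μ {ω | X ω > x} ≤ ENNReal.ofReal (K * Real.exp (-(R * x ^ Q)))) →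
      ∀ t : ℝ, 0 < t →
        (∫⁻ ω, ENNReal.ofReal (Real.exp (t * X ω)) ∂μ) ≤
          ENNReal.ofReal (1 + K + K * (2 / R) ^ (1 / (Q - 1)) * t ^ ρ *
            Real.exp (τ * t ^ ρ))) := by
  have hQ0 : (0:ℝ) < Q := lt_trans one_pos hQ
  have hQ1 : (0:ℝ) < Q - 1 := by linarith
  have hρτ : (0:ℝ) < ρ * τ := by positivity
  have hQR : (0:ℝ) < Q * R := by positivity
  have hsum : ρ + Q = Q * ρ := by
    field_simp at hconj
    linarith
  have hprod : (ρ - 1) * (Q - 1) = 1 := by nlinarith [hsum]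
  have hρ1 : 1 < ρ := by nlinarith [hprod, hQ1]
  have hconjE : Real.HolderConjugate ρ Q := ⟨by
    rw [inv_eq_one_div, inv_eq_one_div, inv_one]; linarith, hρ, hQ0⟩
  -- power identities
  have hrpow_ρ : ((ρ * τ) ^ (1/ρ)) ^ ρ = ρ * τ := by
    rw [← Real.rpow_mul hρτ.le, one_div, inv_mul_cancel₀ hρ.ne', Real.rpow_one]
  have hrpow_Q : ((Q * R) ^ (1/Q)) ^ Q = Q * R := by
    rw [← Real.rpow_mul hQR.le, one_div, inv_mul_cancel₀ hQ0.ne', Real.rpow_one]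
  -- weighted Young inequality
  have young : ∀ a b : ℝ, 0 ≤ a → 0 ≤ b → a * b ≤ τ * a ^ ρ + R * b ^ Q := by
    intro a b ha hb
    have h1 := Real.young_inequality_of_nonneg
      (a := (ρ*τ)^(1/ρ) * a) (b := (Q*R)^(1/Q) * b)
      (mul_nonneg (Real.rpow_nonneg hρτ.le _) ha)
      (mul_nonneg (Real.rpow_nonneg hQR.le _) hb) hconjE
    have h3 : ((ρ*τ)^(1/ρ) * a)^ρ = (ρ*τ) * a^ρ := by
      rw [Real.mul_rpow (Real.rpow_nonneg hρτ.le _) ha, hrpow_ρ]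
    have h4 : ((Q*R)^(1/Q) * b)^Q = (Q*R) * b^Q := by
      rw [Real.mul_rpow (Real.rpow_nonneg hQR.le _) hb, hrpow_Q]
    have h2 : ((ρ*τ)^(1/ρ) * a) * ((Q*R)^(1/Q) * b) = a * b := by
      linear_combination (a*b) * heq
    rw [h2, h3, h4] at h1
    have e1 : (ρ*τ) * a^ρ / ρ = τ * a^ρ := by
      field_simp
    have e2 : (Q*R) * b^Q / Q = R * b^Q := by
      field_simp
    rw [e1, e2] at h1
    exact h1
  -- `(Q*R) = (ρ*τ) ^ (-(Q/ρ))`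
  have hinv : (Q*R) ^ (1/Q) = (ρ*τ) ^ (-(1/ρ)) := by
    rw [Real.rpow_neg hρτ.le]
    exact (eq_inv_of_mul_eq_one_left (by rw [mul_comm]; exact heq))
  have hQRe : Q * R = (ρ*τ) ^ (-(Q/ρ)) := by
    rw [← hrpow_Q, hinv, ← Real.rpow_mul hρτ.le]
    congr 1
    ring
  have hpowQ : (ρ*τ) ^ Q * (Q*R) = ρ * τ := by
    rw [hQRe, ← Real.rpow_add hρτ,
      show Q + -(Q/ρ) = 1 by field_simp; linarith [hsum], Real.rpow_one]
  constructor
  · -- Part (i)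
    intro hLap x hx
    set c : ℝ := x / (ρ * τ) with hc
    have hc0 : 0 < c := div_pos hx hρτ
    set t : ℝ := c ^ (Q / ρ) with htdef
    have ht0 : 0 < t := Real.rpow_pos_of_pos hc0 _
    have htρ : t ^ ρ = c ^ Q := by
      rw [htdef, ← Real.rpow_mul hc0.le]
      congr 1
      field_simp
    have hQρ1 : Q / ρ + 1 = Q := by
      field_simp; linarith [hsum]
    have hcQρ : c ^ (Q/ρ) * c = c ^ Q := by
      calc c ^ (Q/ρ) * c = c ^ (Q/ρ) * c ^ (1:ℝ) := by rw [Real.rpow_one]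
        _ = c ^ (Q/ρ + 1) := (Real.rpow_add hc0 _ _).symm
        _ = c ^ Q := by rw [hQρ1]
    have htx : t * x = (ρ * τ) * c ^ Q := by
      have hx' : x = c * (ρ * τ) := by rw [hc]; field_simp
      calc t * x = c ^ (Q/ρ) * (c * (ρ * τ)) := by rw [htdef, ← hx']
        _ = (c ^ (Q/ρ) * c) * (ρ * τ) := by ring
        _ = (ρ * τ) * c ^ Q := by rw [hcQρ]; ring
    have hcQ : c ^ Q = x ^ Q / (ρ*τ) ^ Q := by
      rw [hc, Real.div_rpow hx.le hρτ.le]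
    have hval : t * x - τ * t ^ ρ = R * x ^ Q := by
      rw [htx, htρ, hcQ]
      have hBpos : (0:ℝ) < (ρ*τ)^Q := Real.rpow_pos_of_pos hρτ Q
      have hA : R * (ρ*τ)^Q * Q = ρ * τ := by linear_combination hpowQ
      field_simp
      have hgoal : Q * (τ * (ρ - 1)) = Q * ((ρ*τ)^Q * R) := by
        linear_combination (-1) * hA - τ * hsum
      exact mul_left_cancel₀ hQ0.ne' hgoal
    -- Markov / Chernoff
    have hεpos : (0:ℝ) < Real.exp (t*x) := Real.exp_pos _
    have hmarkov := mul_meas_ge_le_lintegral₀ (μ := μ)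
      (f := fun ω => ENNReal.ofReal (Real.exp (t * X ω)))
      ((ENNReal.measurable_ofReal.comp ((Real.measurable_exp).comp
        (hXmeas.const_mul t))).aemeasurable) (ENNReal.ofReal (Real.exp (t*x)))
    have hsub : {ω | X ω > x} ⊆
        {ω | ENNReal.ofReal (Real.exp (t*x)) ≤ ENNReal.ofReal (Real.exp (t * X ω))} := by
      intro ω hω
      exact ENNReal.ofReal_le_ofReal (Real.exp_le_exp.2
        (mul_le_mul_of_nonneg_left (le_of_lt hω) ht0.le))
    have h1 : μ {ω | X ω > x} * ENNReal.ofReal (Real.exp (t*x)) ≤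
        ENNReal.ofReal (K * Real.exp (τ * t ^ ρ)) := by
      rw [mul_comm]
      exact le_trans (mul_le_mul_right (measure_mono hsub) _)
        (le_trans hmarkov (hLap t ht0))
    have hne : ENNReal.ofReal (Real.exp (t*x)) ≠ 0 := (ENNReal.ofReal_pos.2 hεpos).ne'
    have hnetop : ENNReal.ofReal (Real.exp (t*x)) ≠ ⊤ := ENNReal.ofReal_ne_top
    calc μ {ω | X ω > x}
        ≤ ENNReal.ofReal (K * Real.exp (τ * t ^ ρ)) / ENNReal.ofReal (Real.exp (t*x)) :=
          (ENNReal.le_div_iff_mul_le (Or.inl hne) (Or.inl hnetop)).2 h1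
      _ = ENNReal.ofReal (K * Real.exp (τ * t ^ ρ) / Real.exp (t*x)) :=
          (ENNReal.ofReal_div_of_pos hεpos).symm
      _ = ENNReal.ofReal (K * Real.exp (-(R * x ^ Q))) := by
          congr 1
          rw [mul_div_assoc, ← Real.exp_sub]
          congr 2
          linarith [hval]
  · -- Part (ii)
    intro hTail t ht
    have gcont : Continuous (fun s : ℝ => t * Real.exp (t * s)) := by continuity
    have hlayer := lintegral_comp_eq_lintegral_meas_lt_mul μ (f := X)
        (g := fun s : ℝ => t * Real.exp (t * s))
        (Filter.Eventually.of_forall hXpos) hXmeas.aemeasurable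
        (fun s _ => gcont.intervalIntegrable _ _)
        (Filter.Eventually.of_forall (fun s => by positivity))
    have hinner : ∀ y : ℝ, (∫ s in (0:ℝ)..y, t * Real.exp (t * s)) = Real.exp (t*y) - 1 := by
      intro y
      have hderiv : ∀ s ∈ Set.uIcc (0:ℝ) y,
          HasDerivAt (fun u => Real.exp (t*u)) (t * Real.exp (t*s)) s := by
        intro s _
        have h1 : HasDerivAt (fun u : ℝ => t * u) t s := by
          simpa using (hasDerivAt_id s).const_mul t
        have := (Real.hasDerivAt_exp (t*s)).comp s h1
        rw [mul_comm]; exact this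
      have := intervalIntegral.integral_eq_sub_of_hasDerivAt hderiv
        (gcont.intervalIntegrable _ _)
      simp only [mul_zero, Real.exp_zero] at this
      exact this
    have hsplit : (∫⁻ ω, ENNReal.ofReal (Real.exp (t * X ω)) ∂μ)
        = (∫⁻ ω, ENNReal.ofReal (Real.exp (t * X ω) - 1) ∂μ) + 1 := by
      have hpt : ∀ ω, ENNReal.ofReal (Real.exp (t * X ω))
          = ENNReal.ofReal (Real.exp (t * X ω) - 1) + 1 := by
        intro ω
        have h1 : (1:ℝ) ≤ Real.exp (t * X ω) :=
          Real.one_le_exp (mul_nonneg ht.le (hXpos ω))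
        rw [← ENNReal.ofReal_one, ← ENNReal.ofReal_add (by linarith) zero_le_one]
        norm_num
      simp_rw [hpt]
      rw [lintegral_add_right _ measurable_const, lintegral_one, measure_univ]
    have hlayer' : (∫⁻ ω, ENNReal.ofReal (Real.exp (t * X ω) - 1) ∂μ)
        = ∫⁻ x in Ioi (0:ℝ), μ {ω | x < X ω} * ENNReal.ofReal (t * Real.exp (t*x)) := by
      rw [← hlayer]
      congr 1
      funext ω
      rw [hinner]
    -- constants
    set x0 : ℝ := (2*t/R) ^ (1/(Q-1)) with hx0def
    have hx00 : 0 < x0 := Real.rpow_pos_of_pos (by positivity) _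
    have hρval : 1/(Q-1) + 1 = ρ := by
      field_simp
      nlinarith [hprod]
    have htx0 : t * x0 = (2/R)^(1/(Q-1)) * t ^ ρ := by
      rw [hx0def, show 2*t/R = (2/R)*t by ring,
        Real.mul_rpow (by positivity) ht.le]
      calc t * ((2/R)^(1/(Q-1)) * t^(1/(Q-1)))
          = (2/R)^(1/(Q-1)) * (t^(1/(Q-1)) * t^(1:ℝ)) := by rw [Real.rpow_one]; ring
        _ = (2/R)^(1/(Q-1)) * t^(1/(Q-1) + 1) := by rw [Real.rpow_add ht]
        _ = (2/R)^(1/(Q-1)) * t ^ ρ := by rw [hρval]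
    -- bound on (0, x0]
    have hbound1 : (∫⁻ x in Ioc (0:ℝ) x0, ENNReal.ofReal (K * t * Real.exp (t*x - R*x^Q)))
        ≤ ENNReal.ofReal (K * (2/R)^(1/(Q-1)) * t ^ ρ * Real.exp (τ * t^ρ)) := by
      have hmono : ∀ x ∈ Ioc (0:ℝ) x0,
          ENNReal.ofReal (K * t * Real.exp (t*x - R*x^Q)) ≤
          ENNReal.ofReal (K * t * Real.exp (τ * t^ρ)) := by
        intro x hx
        have hy := young t x ht.le hx.1.le
        exact ENNReal.ofReal_le_ofReal (mul_le_mul_of_nonneg_left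
          (Real.exp_le_exp.2 (by nlinarith [hy])) (by positivity))
      calc (∫⁻ x in Ioc (0:ℝ) x0, ENNReal.ofReal (K * t * Real.exp (t*x - R*x^Q)))
          ≤ ∫⁻ _ in Ioc (0:ℝ) x0, ENNReal.ofReal (K * t * Real.exp (τ * t^ρ)) :=
            setLIntegral_mono' measurableSet_Ioc hmono
        _ = ENNReal.ofReal (K * t * Real.exp (τ * t^ρ)) * volume (Ioc (0:ℝ) x0) :=
            setLIntegral_const _ _
        _ = ENNReal.ofReal (K * t * Real.exp (τ * t^ρ)) * ENNReal.ofReal x0 := by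
            rw [Real.volume_Ioc, sub_zero]
        _ = ENNReal.ofReal (K * t * Real.exp (τ * t^ρ) * x0) := by
            rw [← ENNReal.ofReal_mul (by positivity)]
        _ = ENNReal.ofReal (K * (2/R)^(1/(Q-1)) * t ^ ρ * Real.exp (τ * t^ρ)) := by
            congr 1
            have : K * t * Real.exp (τ * t^ρ) * x0
                = K * (t * x0) * Real.exp (τ * t^ρ) := by ring
            rw [this, htx0]
            ring
    -- bound on (x0, ∞)
    have hbound2 : (∫⁻ x in Ioi x0, ENNReal.ofReal (K * t * Real.exp (t*x - R*x^Q)))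
        ≤ ENNReal.ofReal K := by
      have hkey : ∀ x : ℝ, x ∈ Ioi x0 → t*x - R*x^Q ≤ -(t*x) := by
        intro x hx
        have hxpos : 0 < x := lt_trans hx00 hx
        have h1 : x ^ Q = x ^ (Q-1) * x := by
          rw [← Real.rpow_add_one hxpos.ne' (Q-1)]
          norm_num
        have h2 : (2*t/R) ≤ x ^ (Q-1) := by
          have h3 := Real.rpow_le_rpow hx00.le (le_of_lt hx) hQ1.le
          rwa [hx0def, ← Real.rpow_mul (by positivity : (0:ℝ) ≤ 2*t/R), one_div,
            inv_mul_cancel₀ hQ1.ne', Real.rpow_one] at h3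
        have h4 : 2*(t*x) ≤ R * x^Q := by
          have h5 : (2*t/R) * x ≤ x^(Q-1) * x :=
            mul_le_mul_of_nonneg_right h2 hxpos.le
          calc 2*(t*x) = R * ((2*t/R) * x) := by field_simp
            _ ≤ R * (x^(Q-1) * x) := by nlinarith
            _ = R * x^Q := by rw [h1]
        linarith
      have hmono : ∀ x ∈ Ioi x0,
          ENNReal.ofReal (K * t * Real.exp (t*x - R*x^Q)) ≤
          ENNReal.ofReal (K * t * Real.exp (-(t*x))) := by
        intro x hx
        exact ENNReal.ofReal_le_ofReal (mul_le_mul_of_nonneg_left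
          (Real.exp_le_exp.2 (hkey x hx)) (by positivity))
      have hint : IntegrableOn (fun x : ℝ => K * t * Real.exp (-(t*x))) (Ioi (0:ℝ)) := by
        simpa [neg_mul, IntegrableOn] using (exp_neg_integrableOn_Ioi 0 ht).const_mul (K*t)
      calc (∫⁻ x in Ioi x0, ENNReal.ofReal (K * t * Real.exp (t*x - R*x^Q)))
          ≤ ∫⁻ x in Ioi x0, ENNReal.ofReal (K * t * Real.exp (-(t*x))) :=
            setLIntegral_mono' measurableSet_Ioi hmono
        _ ≤ ∫⁻ x in Ioi (0:ℝ), ENNReal.ofReal (K * t * Real.exp (-(t*x))) :=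
            lintegral_mono_set (Ioi_subset_Ioi hx00.le)
        _ = ENNReal.ofReal (∫ x in Ioi (0:ℝ), K * t * Real.exp (-(t*x))) :=
            (ofReal_integral_eq_lintegral_ofReal hint
              (Filter.Eventually.of_forall (fun x => by positivity))).symm
        _ = ENNReal.ofReal K := by
            congr 1
            rw [MeasureTheory.integral_const_mul]
            have h6 := integral_comp_mul_left_Ioi (fun u => Real.exp (-u)) 0 ht
            simp only [mul_zero, smul_eq_mul] at h6
            rw [h6, integral_exp_neg_Ioi_zero]
            field_simp
    -- put everything together
    have hIbound : (∫⁻ x in Ioi (0:ℝ), μ {ω | x < X ω} * ENNReal.ofReal (t * Real.exp (t*x)))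
        ≤ ENNReal.ofReal (K * (2/R)^(1/(Q-1)) * t ^ ρ * Real.exp (τ * t^ρ))
          + ENNReal.ofReal K := by
      have step1 : ∀ x ∈ Ioi (0:ℝ), μ {ω | x < X ω} * ENNReal.ofReal (t * Real.exp (t*x))
          ≤ ENNReal.ofReal (K * t * Real.exp (t*x - R*x^Q)) := by
        intro x hx
        have h1 : μ {ω | x < X ω} ≤ ENNReal.ofReal (K * Real.exp (-(R * x^Q))) := hTail x hx
        calc μ {ω | x < X ω} * ENNReal.ofReal (t * Real.exp (t*x))
            ≤ ENNReal.ofReal (K * Real.exp (-(R * x^Q))) * ENNReal.ofReal (t * Real.exp (t*x)) :=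
              mul_le_mul_left h1 _
          _ = ENNReal.ofReal (K * Real.exp (-(R * x^Q)) * (t * Real.exp (t*x))) :=
              (ENNReal.ofReal_mul (by positivity)).symm
          _ = ENNReal.ofReal (K * t * Real.exp (t*x - R*x^Q)) := by
              congr 1
              rw [show t*x - R*x^Q = -(R*x^Q) + t*x by ring, Real.exp_add]
              ring
      calc (∫⁻ x in Ioi (0:ℝ), μ {ω | x < X ω} * ENNReal.ofReal (t * Real.exp (t*x)))
          ≤ ∫⁻ x in Ioi (0:ℝ), ENNReal.ofReal (K * t * Real.exp (t*x - R*x^Q)) :=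
            setLIntegral_mono' measurableSet_Ioi step1
        _ = (∫⁻ x in Ioc (0:ℝ) x0, ENNReal.ofReal (K * t * Real.exp (t*x - R*x^Q)))
            + ∫⁻ x in Ioi x0, ENNReal.ofReal (K * t * Real.exp (t*x - R*x^Q)) := by
            rw [← lintegral_union measurableSet_Ioi (Set.Ioc_disjoint_Ioi le_rfl),
              Set.Ioc_union_Ioi_eq_Ioi hx00.le]
        _ ≤ ENNReal.ofReal (K * (2/R)^(1/(Q-1)) * t ^ ρ * Real.exp (τ * t^ρ))
            + ENNReal.ofReal K := add_le_add hbound1 hbound2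
    rw [hsplit, hlayer']
    have hfinal : ENNReal.ofReal (1 + K + K * (2 / R) ^ (1 / (Q - 1)) * t ^ ρ *
        Real.exp (τ * t ^ ρ))
        = (ENNReal.ofReal (K * (2/R)^(1/(Q-1)) * t ^ ρ * Real.exp (τ * t^ρ))
          + ENNReal.ofReal K) + 1 := by
      rw [← ENNReal.ofReal_one, ← ENNReal.ofReal_add (by positivity) (by positivity),
        ← ENNReal.ofReal_add (by positivity) (by positivity)]
      congr 1
      ring
    rw [hfinal]
    exact add_le_add_left hIbound 1
end

section
/- Let (X_i)_{1≤i≤n} be a finite sequence of supermartingale differences adapted to a filtration (F_i). If for some constants K_i > 0 and all i ∈ {1,…,n}, almost surely E[exp(|X_i|) | F_{i-1}] ≤ K_i, then for each K ≥ (K_1 + ⋯ + K_n)/n: E[exp(t S_n)] ≤ exp(nK t²/(1−t)) for all t ∈ (0,1); P[S_n/n > x] ≤ exp(−n(√(x+K) − √K)²) for all x > 0; and consequently P[S_n/n > x] ≤ exp(−n x²/(K(1+√2)²)) if 0 < x ≤ K and P[S_n/n > x] ≤ exp(−n x/(1+√2)²) if x > K. -/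
open MeasureTheory ProbabilityTheory Filter

open Nat in
lemma bern_exp_aux {t y : ℝ} (ht0 : 0 ≤ t) (ht1 : t ≤ 1) :
    Real.exp (t * y) ≤ 1 + t * y + t ^ 2 * Real.exp |y| := by
  have hexp : ∀ x : ℝ, Real.exp x = ∑' n : ℕ, x ^ n / n ! := by
    intro x
    rw [Real.exp_eq_exp_ℝ, NormedSpace.exp_eq_tsum_div]
  have hs : ∀ x : ℝ, Summable (fun n : ℕ => x ^ n / n !) := Real.summable_pow_div_factorial
  rw [hexp (t*y), hexp |y|]
  have hs1 : Summable (fun n : ℕ => (t*y) ^ (n+1) / (n+1)!) :=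
    (hs (t*y)).comp_injective (add_left_injective 1)
  have hs2 : Summable (fun n : ℕ => (t*y) ^ (n+2) / (n+2)!) :=
    (hs (t*y)).comp_injective (add_left_injective 2)
  have hsy2 : Summable (fun n : ℕ => |y| ^ (n+2) / (n+2)!) :=
    (hs |y|).comp_injective (add_left_injective 2)
  have h0 : (∑' n : ℕ, (t*y) ^ n / n !) = 1 + ∑' n : ℕ, (t*y) ^ (n+1) / (n+1)! := by
    rw [Summable.tsum_eq_zero_add (hs (t*y))]; norm_num
  have h1 : (∑' n : ℕ, (t*y) ^ (n+1) / (n+1)!) = t*y + ∑' n : ℕ, (t*y) ^ (n+2) / (n+2)! := by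
    rw [Summable.tsum_eq_zero_add hs1]; norm_num
  rw [h0, h1]
  have key : (∑' n : ℕ, (t*y) ^ (n+2) / (n+2)!) ≤ t^2 * ∑' n : ℕ, |y| ^ n / n ! := by
    have step1 : (∑' n : ℕ, (t*y) ^ (n+2) / (n+2)!) ≤ ∑' n : ℕ, t^2 * (|y| ^ (n+2) / (n+2)!) := by
      refine Summable.tsum_le_tsum (fun n => ?_) hs2 (hsy2.mul_left _)
      have h2 : (t*y) ^ (n+2) ≤ t^2 * |y| ^ (n+2) := by
        calc (t*y) ^ (n+2) ≤ |(t*y) ^ (n+2)| := le_abs_self _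
        _ = t^(n+2) * |y| ^ (n+2) := by
            rw [abs_pow, abs_mul, abs_of_nonneg ht0, mul_pow]
        _ ≤ t^2 * |y| ^ (n+2) := by
            apply mul_le_mul_of_nonneg_right (pow_le_pow_of_le_one ht0 ht1 (by omega))
              (pow_nonneg (abs_nonneg _) _)
      rw [← mul_div_assoc]
      exact div_le_div_of_nonneg_right h2 (by positivity)
    have step2 : (∑' n : ℕ, |y| ^ (n+2) / (n+2)!) ≤ ∑' n : ℕ, |y| ^ n / n ! := by
      refine Summable.tsum_le_tsum_of_inj (fun n : ℕ => n + 2) (add_left_injective 2)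
        (fun n _ => by positivity) (fun n => le_rfl) hsy2 (hs |y|)
    calc (∑' n : ℕ, (t*y) ^ (n+2) / (n+2)!) ≤ ∑' n : ℕ, t^2 * (|y| ^ (n+2) / (n+2)!) := step1
      _ = t^2 * ∑' n : ℕ, |y| ^ (n+2) / (n+2)! := tsum_mul_left
      _ ≤ t^2 * ∑' n : ℕ, |y| ^ n / n ! := mul_le_mul_of_nonneg_left step2 (by positivity)
  linarith

lemma bern_lintegral_mul_cond_le {Ω : Type*} {m0 : MeasurableSpace Ω} (μ : Measure Ω)
    [IsProbabilityMeasure μ] {m : MeasurableSpace Ω} (hm : m ≤ m0)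
    {Y Z : Ω → ℝ} {c : ℝ} (hc0 : 0 ≤ c)
    (hY : StronglyMeasurable[m] Y) (hY0 : ∀ ω, 0 ≤ Y ω)
    (hZ : Integrable Z μ) (hZ0 : ∀ ω, 0 ≤ Z ω)
    (hcond : ∀ᵐ ω ∂μ, (μ[Z|m]) ω ≤ c) :
    ∫⁻ ω, ENNReal.ofReal (Y ω * Z ω) ∂μ ≤
      ENNReal.ofReal c * ∫⁻ ω, ENNReal.ofReal (Y ω) ∂μ := by
  classical
  set YN : ℕ → Ω → ℝ := fun N ω => min (Y ω) N with hYN_def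
  have hYN_meas : ∀ N, StronglyMeasurable[m] (YN N) := fun N => hY.inf stronglyMeasurable_const
  have hYN_nonneg : ∀ N ω, 0 ≤ YN N ω := fun N ω => le_min (hY0 ω) (Nat.cast_nonneg N)
  have hYN_bound : ∀ N ω, ‖YN N ω‖ ≤ (N : ℝ) := by
    intro N ω
    rw [Real.norm_eq_abs, abs_of_nonneg (hYN_nonneg N ω)]
    exact min_le_right _ _
  have hYN_le : ∀ N ω, YN N ω ≤ Y ω := fun N ω => min_le_left _ _
  have hYN_int : ∀ N, Integrable (YN N) μ := by
    intro N
    refine Integrable.mono' (integrable_const (N : ℝ))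
      ((hYN_meas N).mono hm).aestronglyMeasurable ?_
    exact Eventually.of_forall (hYN_bound N)
  have hYNZ_int : ∀ N, Integrable (YN N * Z) μ := fun N =>
    hZ.bdd_mul ((hYN_meas N).mono hm).aestronglyMeasurable (Eventually.of_forall (hYN_bound N))
  -- step: real integral bound for truncations
  have key : ∀ N, ∫ ω, YN N ω * Z ω ∂μ ≤ c * ∫ ω, YN N ω ∂μ := by
    intro N
    have pull : μ[YN N * Z|m] =ᵐ[μ] YN N * μ[Z|m] :=
      condExp_stronglyMeasurable_mul_of_bound hm (hYN_meas N) hZ N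
        (Eventually.of_forall (hYN_bound N))
    have h1 : ∫ ω, YN N ω * Z ω ∂μ = ∫ ω, (YN N ω) * (μ[Z|m]) ω ∂μ := by
      calc ∫ ω, YN N ω * Z ω ∂μ = ∫ ω, (μ[YN N * Z|m]) ω ∂μ := (integral_condExp hm).symm
        _ = ∫ ω, (YN N ω) * (μ[Z|m]) ω ∂μ := integral_congr_ae pull
    rw [h1]
    have h2 : ∫ ω, (YN N ω) * (μ[Z|m]) ω ∂μ ≤ ∫ ω, c * YN N ω ∂μ := by
      refine integral_mono_ae
        (integrable_condExp.bdd_mul ((hYN_meas N).mono hm).aestronglyMeasurable (Eventually.of_forall (hYN_bound N)))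
        ((hYN_int N).const_mul c) ?_
      filter_upwards [hcond] with ω hω
      calc YN N ω * (μ[Z|m]) ω ≤ YN N ω * c :=
            mul_le_mul_of_nonneg_left hω (hYN_nonneg N ω)
        _ = c * YN N ω := mul_comm _ _
    rw [integral_const_mul] at h2
    exact h2
  -- lintegral bound for truncations
  have keyL : ∀ N, ∫⁻ ω, ENNReal.ofReal (YN N ω * Z ω) ∂μ ≤
      ENNReal.ofReal c * ∫⁻ ω, ENNReal.ofReal (Y ω) ∂μ := by
    intro N
    have e1 : ∫⁻ ω, ENNReal.ofReal (YN N ω * Z ω) ∂μ = ENNReal.ofReal (∫ ω, YN N ω * Z ω ∂μ) := by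
      exact (ofReal_integral_eq_lintegral_ofReal (hYNZ_int N)
        (Eventually.of_forall fun ω => mul_nonneg (hYN_nonneg N ω) (hZ0 ω))).symm
    have e2 : ENNReal.ofReal (∫ ω, YN N ω ∂μ) = ∫⁻ ω, ENNReal.ofReal (YN N ω) ∂μ :=
      ofReal_integral_eq_lintegral_ofReal (hYN_int N) (Eventually.of_forall (hYN_nonneg N))
    calc ∫⁻ ω, ENNReal.ofReal (YN N ω * Z ω) ∂μ = ENNReal.ofReal (∫ ω, YN N ω * Z ω ∂μ) := e1
      _ ≤ ENNReal.ofReal (c * ∫ ω, YN N ω ∂μ) := ENNReal.ofReal_le_ofReal (key N)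
      _ = ENNReal.ofReal c * ENNReal.ofReal (∫ ω, YN N ω ∂μ) :=
          ENNReal.ofReal_mul hc0
      _ = ENNReal.ofReal c * ∫⁻ ω, ENNReal.ofReal (YN N ω) ∂μ := by rw [e2]
      _ ≤ ENNReal.ofReal c * ∫⁻ ω, ENNReal.ofReal (Y ω) ∂μ := by
          gcongr with ω
          exact hYN_le N ω
  -- monotone convergence
  have mct : ∫⁻ ω, ENNReal.ofReal (Y ω * Z ω) ∂μ =
      ⨆ N, ∫⁻ ω, ENNReal.ofReal (YN N ω * Z ω) ∂μ := by
    rw [← lintegral_iSup']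
    · refine lintegral_congr fun ω => ?_
      have hsup : ⨆ N : ℕ, ENNReal.ofReal (YN N ω * Z ω) = ENNReal.ofReal (Y ω * Z ω) := by
        apply le_antisymm
        · refine iSup_le fun N => ENNReal.ofReal_le_ofReal ?_
          exact mul_le_mul_of_nonneg_right (hYN_le N ω) (hZ0 ω)
        · refine le_iSup_of_le (Nat.ceil (Y ω)) (le_of_eq ?_)
          congr 1
          rw [hYN_def]
          simp only
          rw [min_eq_left (Nat.le_ceil (Y ω))]
      rw [hsup]
    · intro N
      refine ENNReal.measurable_ofReal.comp_aemeasurable ?_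
      exact (((hYN_meas N).mono hm).aestronglyMeasurable.aemeasurable).mul
        hZ.aestronglyMeasurable.aemeasurable
    · refine Eventually.of_forall fun ω => ?_
      intro i j hij
      refine ENNReal.ofReal_le_ofReal ?_
      refine mul_le_mul_of_nonneg_right ?_ (hZ0 ω)
      exact min_le_min le_rfl (Nat.cast_le.mpr hij)
  rw [mct]
  exact iSup_le keyL

lemma bern_mgf_bound {Ω : Type*} {m0 : MeasurableSpace Ω} (μ : Measure Ω) [IsProbabilityMeasure μ]
    (ℱ : Filtration ℕ m0) (n : ℕ) (X : ℕ → Ω → ℝ) (Kseq : ℕ → ℝ)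
    (hKpos : ∀ i ∈ Finset.Icc 1 n, 0 < Kseq i)
    (hadp : ∀ i ∈ Finset.Icc 1 n, StronglyMeasurable[ℱ i] (X i))
    (hint : ∀ i ∈ Finset.Icc 1 n, Integrable (X i) μ)
    (hsmg : ∀ i ∈ Finset.Icc 1 n, ∀ᵐ ω ∂μ, (μ[X i|ℱ (i - 1)]) ω ≤ 0)
    (hexpint : ∀ i ∈ Finset.Icc 1 n, Integrable (fun ω => Real.exp |X i ω|) μ)
    (hcond : ∀ i ∈ Finset.Icc 1 n,
      ∀ᵐ ω ∂μ, (μ[fun ω' => Real.exp (|X i ω'|)|ℱ (i - 1)]) ω ≤ Kseq i)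
    (t : ℝ) (ht0 : 0 < t) (ht1 : t < 1) :
    ∀ m, m ≤ n → (∫⁻ ω, ENNReal.ofReal (Real.exp (t * ∑ i ∈ Finset.Icc 1 m, X i ω)) ∂μ) ≤
      ∏ i ∈ Finset.Icc 1 m, ENNReal.ofReal (1 + t ^ 2 * Kseq i) := by
  intro m
  induction m with
  | zero =>
    intro _
    rw [show Finset.Icc 1 0 = (∅ : Finset ℕ) from Finset.Icc_eq_empty (by omega)]
    simp
  | succ m ih =>
    intro hm1n
    have hmn : m ≤ n := by omega
    have mem : m + 1 ∈ Finset.Icc 1 n := by simp [Finset.mem_Icc]; omega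
    have ihm := ih hmn
    set Y : Ω → ℝ := fun ω => Real.exp (t * ∑ i ∈ Finset.Icc 1 m, X i ω) with hY_def
    set Z : Ω → ℝ := fun ω => Real.exp (t * X (m+1) ω) with hZ_def
    have hXint := hint (m+1) mem
    have hEint := hexpint (m+1) mem
    -- measurability of Y w.r.t. ℱ m
    have hY_meas : StronglyMeasurable[ℱ m] Y := by
      apply Real.continuous_exp.comp_stronglyMeasurable
      apply StronglyMeasurable.const_mul
      apply Finset.stronglyMeasurable_fun_sum
      intro i hi
      have hi' : i ∈ Finset.Icc 1 n := by
        simp only [Finset.mem_Icc] at hi ⊢; omega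
      exact (hadp i hi').mono (ℱ.mono (by simp only [Finset.mem_Icc] at hi; omega))
    have hY0 : ∀ ω, 0 ≤ Y ω := fun ω => (Real.exp_pos _).le
    have hZ0 : ∀ ω, 0 ≤ Z ω := fun ω => (Real.exp_pos _).le
    -- integrability of Z
    have hZ_aesm : AEStronglyMeasurable Z μ :=
      (Real.continuous_exp.comp_stronglyMeasurable
        (((hadp (m+1) mem).mono (ℱ.le (m+1))).const_mul t)).aestronglyMeasurable
    have hZ_le : ∀ ω, Z ω ≤ Real.exp |X (m+1) ω| := by
      intro ω
      apply Real.exp_le_exp.mpr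
      calc t * X (m+1) ω ≤ t * |X (m+1) ω| :=
            mul_le_mul_of_nonneg_left (le_abs_self _) ht0.le
        _ ≤ 1 * |X (m+1) ω| := mul_le_mul_of_nonneg_right ht1.le (abs_nonneg _)
        _ = |X (m+1) ω| := one_mul _
    have hZ_int : Integrable Z μ := by
      refine Integrable.mono' hEint hZ_aesm (Eventually.of_forall fun ω => ?_)
      rw [Real.norm_eq_abs, abs_of_nonneg (hZ0 ω)]
      exact hZ_le ω
    -- conditional bound on Z
    have hc0 : (0:ℝ) ≤ 1 + t ^ 2 * Kseq (m+1) := by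
      have := hKpos (m+1) mem
      positivity
    have hcondZ : ∀ᵐ ω ∂μ, (μ[Z|ℱ m]) ω ≤ 1 + t ^ 2 * Kseq (m+1) := by
      set W1 : Ω → ℝ := fun ω => 1 + t * X (m+1) ω with hW1_def
      set W2 : Ω → ℝ := fun ω => t ^ 2 * Real.exp |X (m+1) ω| with hW2_def
      have hf1 : Integrable W1 μ := (integrable_const (1:ℝ)).add (hXint.const_mul t)
      have hf2 : Integrable W2 μ := hEint.const_mul _
      have hZW : Z ≤ᵐ[μ] W1 + W2 := by
        refine Eventually.of_forall fun ω => ?_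
        have := bern_exp_aux (y := X (m+1) ω) ht0.le ht1.le
        simpa [hW1_def, hW2_def, add_assoc] using this
      have h4 : μ[Z|ℱ m] ≤ᵐ[μ] μ[W1 + W2|ℱ m] := condExp_mono hZ_int (hf1.add hf2) hZW
      have h5 : μ[W1 + W2|ℱ m] =ᵐ[μ] μ[W1|ℱ m] + μ[W2|ℱ m] := condExp_add hf1 hf2 (ℱ m)
      have h6 : μ[W1|ℱ m] =ᵐ[μ] μ[(fun _ => (1:ℝ))|ℱ m] + μ[(fun ω => t * X (m+1) ω)|ℱ m] :=
        condExp_add (integrable_const (1:ℝ)) (hXint.const_mul t) (ℱ m)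
      have h7 : μ[(fun _ => (1:ℝ))|ℱ m] = fun _ => (1:ℝ) := condExp_const (ℱ.le m) (1:ℝ)
      have h8 : μ[(fun ω => t * X (m+1) ω)|ℱ m] =ᵐ[μ] t • μ[X (m+1)|ℱ m] :=
        condExp_smul t (X (m+1)) (ℱ m)
      have h9 : μ[W2|ℱ m] =ᵐ[μ] (t ^ 2) • μ[(fun ω' => Real.exp (|X (m+1) ω'|))|ℱ m] :=
        condExp_smul (t ^ 2) (fun ω' => Real.exp (|X (m+1) ω'|)) (ℱ m)
      have hsmg' := hsmg (m+1) mem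
      have hcond' := hcond (m+1) mem
      have hm1 : m + 1 - 1 = m := rfl
      rw [hm1] at hsmg' hcond'
      filter_upwards [h4, h5, h6, h8, h9, hsmg', hcond'] with ω e4 e5 e6 e8 e9 esmg econd
      have : (μ[Z|ℱ m]) ω ≤ 1 + t * (μ[X (m+1)|ℱ m]) ω
          + t ^ 2 * (μ[(fun ω' => Real.exp (|X (m+1) ω'|))|ℱ m]) ω := by
        calc (μ[Z|ℱ m]) ω ≤ (μ[W1 + W2|ℱ m]) ω := e4
          _ = (μ[W1|ℱ m]) ω + (μ[W2|ℱ m]) ω := e5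
          _ = ((μ[(fun _ => (1:ℝ))|ℱ m]) ω + (μ[(fun ω => t * X (m+1) ω)|ℱ m]) ω)
              + (μ[W2|ℱ m]) ω := by rw [e6]; rfl
          _ = (1 + t * (μ[X (m+1)|ℱ m]) ω) + t ^ 2
              * (μ[(fun ω' => Real.exp (|X (m+1) ω'|))|ℱ m]) ω := by
            rw [h7, e8, e9]; simp [smul_eq_mul]
      refine this.trans ?_
      have h10 : t * (μ[X (m+1)|ℱ m]) ω ≤ 0 := mul_nonpos_of_nonneg_of_nonpos ht0.le esmg
      have h11 : t ^ 2 * (μ[(fun ω' => Real.exp (|X (m+1) ω'|))|ℱ m]) ω ≤ t ^ 2 * Kseq (m+1) :=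
        mul_le_mul_of_nonneg_left econd (by positivity)
      linarith
    -- apply the key lemma
    have key := bern_lintegral_mul_cond_le μ (ℱ.le m) hc0 hY_meas hY0 hZ_int hZ0 hcondZ
    have heq : ∀ ω, Real.exp (t * ∑ i ∈ Finset.Icc 1 (m+1), X i ω) = Y ω * Z ω := by
      intro ω
      rw [Finset.sum_Icc_succ_top (by omega : 1 ≤ m + 1), mul_add, Real.exp_add]
    calc (∫⁻ ω, ENNReal.ofReal (Real.exp (t * ∑ i ∈ Finset.Icc 1 (m+1), X i ω)) ∂μ)
        = ∫⁻ ω, ENNReal.ofReal (Y ω * Z ω) ∂μ := by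
          refine lintegral_congr fun ω => ?_; rw [heq ω]
      _ ≤ ENNReal.ofReal (1 + t ^ 2 * Kseq (m+1)) * ∫⁻ ω, ENNReal.ofReal (Y ω) ∂μ := key
      _ ≤ ENNReal.ofReal (1 + t ^ 2 * Kseq (m+1))
          * ∏ i ∈ Finset.Icc 1 m, ENNReal.ofReal (1 + t ^ 2 * Kseq i) := by
          gcongr
      _ = ∏ i ∈ Finset.Icc 1 (m+1), ENNReal.ofReal (1 + t ^ 2 * Kseq i) := by
          rw [Finset.prod_Icc_succ_top (by omega : 1 ≤ m + 1), mul_comm]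

lemma bern_chernoff {Ω : Type*} {m0 : MeasurableSpace Ω} (μ : Measure Ω) [IsProbabilityMeasure μ]
    {S : Ω → ℝ} (hS : Measurable S) {a B t : ℝ} (ht : 0 < t)
    (h : (∫⁻ ω, ENNReal.ofReal (Real.exp (t * S ω)) ∂μ) ≤ ENNReal.ofReal (Real.exp B)) :
    μ {ω | a < S ω} ≤ ENNReal.ofReal (Real.exp (B - t * a)) := by
  have hf : Measurable fun ω => ENNReal.ofReal (Real.exp (t * S ω)) :=
    ENNReal.measurable_ofReal.comp (Real.measurable_exp.comp (hS.const_mul t))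
  have hsub : {ω | a < S ω} ⊆
      {ω | ENNReal.ofReal (Real.exp (t*a)) ≤ ENNReal.ofReal (Real.exp (t * S ω))} := by
    intro ω hω
    exact ENNReal.ofReal_le_ofReal (Real.exp_le_exp.mpr (mul_le_mul_of_nonneg_left hω.le ht.le))
  have hmarkov := mul_meas_ge_le_lintegral₀ (μ := μ) hf.aemeasurable (ENNReal.ofReal (Real.exp (t*a)))
  have h2 : ENNReal.ofReal (Real.exp (t*a)) * μ {ω | a < S ω} ≤ ENNReal.ofReal (Real.exp B) := by
    refine le_trans ?_ (hmarkov.trans h)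
    exact mul_le_mul_right (measure_mono hsub) _
  have hne : ENNReal.ofReal (Real.exp (t*a)) ≠ 0 := by
    simp [ENNReal.ofReal_eq_zero, not_le, Real.exp_pos]
  have hnetop : ENNReal.ofReal (Real.exp (t*a)) ≠ ⊤ := ENNReal.ofReal_ne_top
  have h3 : μ {ω | a < S ω} ≤ ENNReal.ofReal (Real.exp B) / ENNReal.ofReal (Real.exp (t*a)) :=
    (ENNReal.le_div_iff_mul_le (Or.inl hne) (Or.inl hnetop)).mpr (by rwa [mul_comm])
  refine h3.trans_eq ?_
  rw [← ENNReal.ofReal_div_of_pos (Real.exp_pos _), ← Real.exp_sub]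

/-- Theorem 4.1: Bernstein-type inequalities for supermartingale differences under the
conditions `E[exp |X_i| | F_{i-1}] ≤ K_i`, with `K ≥ (K_1 + ⋯ + K_n)/n`. -/
theorem supermartingale_bernstein_inequality_Ki
    {Ω : Type*} {m0 : MeasurableSpace Ω} (μ : Measure Ω) [IsProbabilityMeasure μ]
    (ℱ : Filtration ℕ m0) (n : ℕ) (hn : 1 ≤ n) (X : ℕ → Ω → ℝ) (Kseq : ℕ → ℝ)
    (hKpos : ∀ i ∈ Finset.Icc 1 n, 0 < Kseq i)
    (hadp : ∀ i ∈ Finset.Icc 1 n, StronglyMeasurable[ℱ i] (X i))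
    (hint : ∀ i ∈ Finset.Icc 1 n, Integrable (X i) μ)
    (hsmg : ∀ i ∈ Finset.Icc 1 n, ∀ᵐ ω ∂μ, (μ[X i|ℱ (i - 1)]) ω ≤ 0)
    (hexpint : ∀ i ∈ Finset.Icc 1 n, Integrable (fun ω => Real.exp |X i ω|) μ)
    (hcond : ∀ i ∈ Finset.Icc 1 n,
      ∀ᵐ ω ∂μ, (μ[fun ω' => Real.exp (|X i ω'|)|ℱ (i - 1)]) ω ≤ Kseq i) :
    ∀ K : ℝ, (∑ i ∈ Finset.Icc 1 n, Kseq i) / n ≤ K →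
      (∀ t : ℝ, t ∈ Set.Ioo (0 : ℝ) 1 →
        (∫⁻ ω, ENNReal.ofReal (Real.exp (t * ∑ i ∈ Finset.Icc 1 n, X i ω)) ∂μ) ≤
          ENNReal.ofReal (Real.exp (n * K * t ^ 2 / (1 - t)))) ∧
      (∀ x : ℝ, 0 < x →
        μ {ω | (∑ i ∈ Finset.Icc 1 n, X i ω) / n > x} ≤
          ENNReal.ofReal (Real.exp (-(n * (Real.sqrt (x + K) - Real.sqrt K) ^ 2)))) ∧
      (∀ x : ℝ, 0 < x → x ≤ K →
        μ {ω | (∑ i ∈ Finset.Icc 1 n, X i ω) / n > x} ≤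
          ENNReal.ofReal (Real.exp (-(n * x ^ 2 / (K * (1 + Real.sqrt 2) ^ 2))))) ∧
      (∀ x : ℝ, K < x →
        μ {ω | (∑ i ∈ Finset.Icc 1 n, X i ω) / n > x} ≤
          ENNReal.ofReal (Real.exp (-(n * x / (1 + Real.sqrt 2) ^ 2)))) := by
  intro K hK
  have hn0 : (0:ℝ) < n := by exact_mod_cast hn
  have hKsum_pos : 0 < ∑ i ∈ Finset.Icc 1 n, Kseq i :=
    Finset.sum_pos hKpos ⟨1, by simp [Finset.mem_Icc]; omega⟩
  have hKpos' : (0:ℝ) < K := lt_of_lt_of_le (div_pos hKsum_pos hn0) hK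
  have hsum_le : ∑ i ∈ Finset.Icc 1 n, Kseq i ≤ n * K := by
    rwa [div_le_iff₀ hn0, mul_comm] at hK
  have hS_meas : Measurable fun ω => ∑ i ∈ Finset.Icc 1 n, X i ω :=
    (Finset.stronglyMeasurable_fun_sum _ fun i hi => ((hadp i hi).mono (ℱ.le i))).measurable
  -- part 1
  have part1 : ∀ t : ℝ, t ∈ Set.Ioo (0 : ℝ) 1 →
      (∫⁻ ω, ENNReal.ofReal (Real.exp (t * ∑ i ∈ Finset.Icc 1 n, X i ω)) ∂μ) ≤
        ENNReal.ofReal (Real.exp (n * K * t ^ 2 / (1 - t))) := by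
    intro t ht
    obtain ⟨ht0, ht1⟩ := ht
    have hb := bern_mgf_bound μ ℱ n X Kseq hKpos hadp hint hsmg hexpint hcond t ht0 ht1 n le_rfl
    refine hb.trans ?_
    have e1 : ∏ i ∈ Finset.Icc 1 n, ENNReal.ofReal (1 + t ^ 2 * Kseq i)
        = ENNReal.ofReal (∏ i ∈ Finset.Icc 1 n, (1 + t ^ 2 * Kseq i)) :=
      (ENNReal.ofReal_prod_of_nonneg fun i hi => by have := hKpos i hi; positivity).symm
    rw [e1]
    apply ENNReal.ofReal_le_ofReal
    have h1t : 0 < 1 - t := by linarith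
    calc ∏ i ∈ Finset.Icc 1 n, (1 + t ^ 2 * Kseq i)
        ≤ ∏ i ∈ Finset.Icc 1 n, Real.exp (t ^ 2 * Kseq i) := by
          refine Finset.prod_le_prod (fun i hi => by have := hKpos i hi; positivity)
            (fun i hi => ?_)
          have := Real.add_one_le_exp (t ^ 2 * Kseq i)
          linarith
      _ = Real.exp (∑ i ∈ Finset.Icc 1 n, t ^ 2 * Kseq i) := (Real.exp_sum _ _).symm
      _ ≤ Real.exp (n * K * t ^ 2 / (1 - t)) := by
          apply Real.exp_le_exp.mpr
          rw [← Finset.mul_sum]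
          have h2 : t ^ 2 * (∑ i ∈ Finset.Icc 1 n, Kseq i) ≤ t ^ 2 * (n * K) :=
            mul_le_mul_of_nonneg_left hsum_le (by positivity)
          have h3 : t ^ 2 * (n * K) ≤ n * K * t ^ 2 / (1 - t) := by
            rw [le_div_iff₀ h1t]
            have hnK : 0 ≤ n * K * t ^ 2 := by positivity
            nlinarith
          linarith
  have part2 : ∀ x : ℝ, 0 < x →
      μ {ω | (∑ i ∈ Finset.Icc 1 n, X i ω) / n > x} ≤
        ENNReal.ofReal (Real.exp (-(n * (Real.sqrt (x + K) - Real.sqrt K) ^ 2))) := by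
    intro x hx
    set a := Real.sqrt K with ha_def
    set b := Real.sqrt (x + K) with hb_def
    have ha2 : a ^ 2 = K := Real.sq_sqrt hKpos'.le
    have hb2 : b ^ 2 = x + K := Real.sq_sqrt (by linarith)
    have ha0 : 0 < a := Real.sqrt_pos.mpr hKpos'
    have hb0 : 0 < b := Real.sqrt_pos.mpr (by linarith)
    have hab : a < b := by
      rw [ha_def, hb_def]
      exact Real.sqrt_lt_sqrt hKpos'.le (by linarith)
    set t : ℝ := 1 - a / b with ht_def
    have hdiv : 0 < a / b := div_pos ha0 hb0
    have hdiv1 : a / b < 1 := (div_lt_one hb0).mpr hab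
    have ht0 : 0 < t := by rw [ht_def]; linarith
    have ht1 : t < 1 := by rw [ht_def]; linarith
    have hmgf := part1 t ⟨ht0, ht1⟩
    have hch := bern_chernoff μ hS_meas (a := (n:ℝ) * x) (B := n * K * t ^ 2 / (1 - t)) ht0 hmgf
    have hset : {ω | (∑ i ∈ Finset.Icc 1 n, X i ω) / n > x}
        = {ω | (n:ℝ) * x < ∑ i ∈ Finset.Icc 1 n, X i ω} := by
      ext ω
      simp only [Set.mem_setOf_eq, gt_iff_lt, lt_div_iff₀ hn0]
      constructor <;> intro h <;> nlinarith
    rw [hset]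
    refine hch.trans_eq ?_
    congr 1
    have h1t : 1 - t = a / b := by rw [ht_def]; ring
    rw [h1t]
    have hx_eq : x = b ^ 2 - a ^ 2 := by linarith
    rw [hx_eq, ← ha2, ht_def]
    congr 1
    field_simp
    ring
  have mono_bound : ∀ x : ℝ, 0 < x → ∀ r : ℝ,
      r ≤ n * (Real.sqrt (x + K) - Real.sqrt K) ^ 2 →
      μ {ω | (∑ i ∈ Finset.Icc 1 n, X i ω) / n > x} ≤ ENNReal.ofReal (Real.exp (-r)) := by
    intro x hx r hr
    exact (part2 x hx).trans (ENNReal.ofReal_le_ofReal (Real.exp_le_exp.mpr (by linarith)))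
  refine ⟨part1, part2, ?_, ?_⟩
  · -- part 3 : 0 < x ≤ K
    intro x hx hxK
    apply mono_bound x hx
    set a := Real.sqrt K with ha_def
    set b := Real.sqrt (x + K) with hb_def
    have ha2 : a ^ 2 = K := Real.sq_sqrt hKpos'.le
    have hb2 : b ^ 2 = x + K := Real.sq_sqrt (by linarith)
    have ha0 : 0 < a := Real.sqrt_pos.mpr hKpos'
    have hb0 : 0 < b := Real.sqrt_pos.mpr (by linarith)
    have hs2 : Real.sqrt 2 ^ 2 = 2 := Real.sq_sqrt (by norm_num)
    have hs0 : 0 < Real.sqrt 2 := Real.sqrt_pos.mpr (by norm_num)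
    have hba : (b - a) * (b + a) = x := by nlinarith
    have hb_le : b ≤ Real.sqrt 2 * a := by
      rw [ha_def, hb_def]
      calc Real.sqrt (x + K) ≤ Real.sqrt (2 * K) := Real.sqrt_le_sqrt (by linarith)
        _ = Real.sqrt 2 * Real.sqrt K := Real.sqrt_mul (by norm_num) K
    have hsum_le : b + a ≤ (1 + Real.sqrt 2) * a := by
      calc b + a ≤ Real.sqrt 2 * a + a := add_le_add hb_le le_rfl
        _ = (1 + Real.sqrt 2) * a := by ring
    have hsum_sq : (b + a) ^ 2 ≤ (1 + Real.sqrt 2) ^ 2 * K := by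
      calc (b + a) ^ 2 ≤ ((1 + Real.sqrt 2) * a) ^ 2 :=
            pow_le_pow_left₀ (by positivity) hsum_le 2
        _ = (1 + Real.sqrt 2) ^ 2 * K := by rw [mul_pow, ha2]
    rw [div_le_iff₀ (by positivity)]
    have hx2 : x ^ 2 = (b - a) ^ 2 * (b + a) ^ 2 := by rw [← hba]; ring
    have h2 : (b - a) ^ 2 * (b + a) ^ 2 ≤ (b - a) ^ 2 * ((1 + Real.sqrt 2) ^ 2 * K) :=
      mul_le_mul_of_nonneg_left hsum_sq (sq_nonneg _)
    have h3 : x ^ 2 ≤ (b - a) ^ 2 * (K * (1 + Real.sqrt 2) ^ 2) := by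
      rw [hx2]
      refine h2.trans_eq (by ring)
    calc (n:ℝ) * x ^ 2 ≤ (n:ℝ) * ((b - a) ^ 2 * (K * (1 + Real.sqrt 2) ^ 2)) :=
          mul_le_mul_of_nonneg_left h3 hn0.le
      _ = (n:ℝ) * (b - a) ^ 2 * (K * (1 + Real.sqrt 2) ^ 2) := by ring
  · -- part 4 : K < x
    intro x hxK
    have hx : 0 < x := lt_trans hKpos' hxK
    apply mono_bound x hx
    set a := Real.sqrt K with ha_def
    set b := Real.sqrt (x + K) with hb_def
    set c := Real.sqrt x with hc_def
    have ha2 : a ^ 2 = K := Real.sq_sqrt hKpos'.le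
    have hb2 : b ^ 2 = x + K := Real.sq_sqrt (by linarith)
    have hc2 : c ^ 2 = x := Real.sq_sqrt hx.le
    have ha0 : 0 < a := Real.sqrt_pos.mpr hKpos'
    have hb0 : 0 < b := Real.sqrt_pos.mpr (by linarith)
    have hc0 : 0 < c := Real.sqrt_pos.mpr hx
    have hs2 : Real.sqrt 2 ^ 2 = 2 := Real.sq_sqrt (by norm_num)
    have hs0 : 0 < Real.sqrt 2 := Real.sqrt_pos.mpr (by norm_num)
    have hba : (b - a) * (b + a) = x := by nlinarith
    have hb_le : b ≤ Real.sqrt 2 * c := by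
      rw [hb_def, hc_def]
      calc Real.sqrt (x + K) ≤ Real.sqrt (2 * x) := Real.sqrt_le_sqrt (by linarith)
        _ = Real.sqrt 2 * Real.sqrt x := Real.sqrt_mul (by norm_num) x
    have ha_le : a ≤ c := by
      rw [ha_def, hc_def]
      exact Real.sqrt_le_sqrt hxK.le
    have hsum_le : b + a ≤ (1 + Real.sqrt 2) * c := by
      calc b + a ≤ Real.sqrt 2 * c + c := add_le_add hb_le ha_le
        _ = (1 + Real.sqrt 2) * c := by ring
    have hsum_sq : (b + a) ^ 2 ≤ (1 + Real.sqrt 2) ^ 2 * x := by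
      calc (b + a) ^ 2 ≤ ((1 + Real.sqrt 2) * c) ^ 2 :=
            pow_le_pow_left₀ (by positivity) hsum_le 2
        _ = (1 + Real.sqrt 2) ^ 2 * x := by rw [mul_pow, hc2]
    rw [div_le_iff₀ (by positivity)]
    have hx2 : x ^ 2 = (b - a) ^ 2 * (b + a) ^ 2 := by rw [← hba]; ring
    have h2 : (b - a) ^ 2 * (b + a) ^ 2 ≤ (b - a) ^ 2 * ((1 + Real.sqrt 2) ^ 2 * x) :=
      mul_le_mul_of_nonneg_left hsum_sq (sq_nonneg _)
    have hM : x ≤ (b - a) ^ 2 * (1 + Real.sqrt 2) ^ 2 := by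
      have h3 : x * x ≤ ((b - a) ^ 2 * (1 + Real.sqrt 2) ^ 2) * x := by
        calc x * x = (b - a) ^ 2 * (b + a) ^ 2 := by rw [← hx2]; ring
          _ ≤ (b - a) ^ 2 * ((1 + Real.sqrt 2) ^ 2 * x) := h2
          _ = ((b - a) ^ 2 * (1 + Real.sqrt 2) ^ 2) * x := by ring
      exact le_of_mul_le_mul_right (by linarith) hx
    calc (n:ℝ) * x ≤ (n:ℝ) * ((b - a) ^ 2 * (1 + Real.sqrt 2) ^ 2) :=
          mul_le_mul_of_nonneg_left hM hn0.le
      _ = (n:ℝ) * (b - a) ^ 2 * (1 + Real.sqrt 2) ^ 2 := by ring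
end
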